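/- If the tree representation of a secondary structure S admits a separated proper coloring, then S is designable over {A,U,C,G} in the Watson-Crick model. -/

import Mathlib

open scoped Classical

/-- An RNA nucleotide. -/
inductive Base | A | U | C | G
deriving DecidableEq, Inhabited, Repr

/-- The Watson-Crick pairing relation (only G-C and A-U pairs allowed). -/
def wcPair : Base → Base → Prop
  | .G, .C => True | .C, .G => True
  | .A, .U => True | .U, .A => True
  | _, _ => False

/-- The Nussinov-Jacobson pairing relation (G-C, A-U and G-U pairs allowed). -/
def njPair : Base → Base → Prop
  | .G, .C => True | .C, .G => True
  | .A, .U => True | .U, .A => True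
  | .G, .U => True | .U, .G => True
  | _, _ => False

/-- An RNA (pseudoknot-free) secondary structure, 0-indexed positions. -/
structure SecStr where
  len : ℕ
  pairs : Finset (ℕ × ℕ)
  lt : ∀ p ∈ pairs, p.1 < p.2
  ub : ∀ p ∈ pairs, p.2 < len
  once : ∀ p ∈ pairs, ∀ q ∈ pairs, p ≠ q →
    p.1 ≠ q.1 ∧ p.1 ≠ q.2 ∧ p.2 ≠ q.1 ∧ p.2 ≠ q.2
  noncross : ∀ p ∈ pairs, ∀ q ∈ pairs,
    ¬ (p.1 < q.1 ∧ q.1 < p.2 ∧ p.2 < q.2)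

def SecStr.pairedAt (S : SecStr) (i : ℕ) : Prop := ∃ p ∈ S.pairs, p.1 = i ∨ p.2 = i
def SecStr.unpairedAt (S : SecStr) (i : ℕ) : Prop := i < S.len ∧ ¬ S.pairedAt i
def SecStr.saturated (S : SecStr) : Prop := ∀ i < S.len, S.pairedAt i

/-- A structure is compatible with a sequence `w` (w.r.t. pairing relation `R`)
if it has the right length and all base pairs are `R`-valid. -/
def compat {α : Type*} [Inhabited α] (R : α → α → Prop) (w : List α) (S : SecStr) : Prop :=
  S.len = w.length ∧ ∀ p ∈ S.pairs, R (w.getD p.1 default) (w.getD p.2 default)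

/-- Base-pair-sum free energy of a structure on a sequence. -/
noncomputable def energy {α : Type*} [Inhabited α] (E : α → α → ℝ) (w : List α)
    (S : SecStr) : ℝ :=
  ∑ p ∈ S.pairs, E (w.getD p.1 default) (w.getD p.2 default)

/-- `w` is a Δ-design for `S`: `S` is compatible with `w`, and every other
compatible structure has energy at least `energy E w S + Δ`. -/
def isDesign {α : Type*} [Inhabited α] (R : α → α → Prop) (E : α → α → ℝ) (Δ : ℝ)
    (w : List α) (S : SecStr) : Prop :=
  compat R w S ∧ ∀ S' : SecStr, compat R w S' → S' ≠ S →
    energy E w S' ≥ energy E w S + Δ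

/- Tree representation machinery. -/
def encloses (q p : ℕ × ℕ) : Prop := q.1 < p.1 ∧ p.2 < q.2
def SecStr.hasParent (S : SecStr) (p : ℕ × ℕ) : Prop := ∃ q ∈ S.pairs, encloses q p
def SecStr.isParentOf (S : SecStr) (q p : ℕ × ℕ) : Prop :=
  q ∈ S.pairs ∧ p ∈ S.pairs ∧ encloses q p ∧ ¬ ∃ m ∈ S.pairs, encloses q m ∧ encloses m p

/-- Degree of a paired node: number of paired children plus one for the parent (if any). -/
noncomputable def SecStr.pairDeg (S : SecStr) (p : ℕ × ℕ) : ℕ :=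
  (S.pairs.filter (fun c => S.isParentOf p c)).card + (if S.hasParent p then 1 else 0)
/-- Degree of the virtual root: number of top-level base pairs. -/
noncomputable def SecStr.rootDeg (S : SecStr) : ℕ :=
  (S.pairs.filter (fun p => ¬ S.hasParent p)).card
/-- All nodes of the tree representation (including the virtual root) have degree ≤ d. -/
def SecStr.degLE (S : SecStr) (d : ℕ) : Prop :=
  S.rootDeg ≤ d ∧ ∀ p ∈ S.pairs, S.pairDeg p ≤ d

/-- A sequence is saturable if a saturated structure is compatible with it. -/
def saturable {α : Type*} [Inhabited α] (R : α → α → Prop) (w : List α) : Prop :=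
  ∃ S : SecStr, compat R w S ∧ S.saturated
/-- Atomic saturable: saturable, and no (nonempty) proper prefix is saturable. -/
def atomicSaturable {α : Type*} [Inhabited α] (R : α → α → Prop) (w : List α) : Prop :=
  saturable R w ∧ ∀ k, 0 < k → k < w.length → ¬ saturable R (w.take k)

/- Motifs. -/
def SecStr.unpChildOfPair (S : SecStr) (q : ℕ × ℕ) (u : ℕ) : Prop :=
  S.unpairedAt u ∧ q.1 < u ∧ u < q.2 ∧
    ¬ ∃ m ∈ S.pairs, q.1 < m.1 ∧ m.1 < u ∧ u < m.2 ∧ m.2 < q.2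
def SecStr.unpChildOfRoot (S : SecStr) (u : ℕ) : Prop :=
  S.unpairedAt u ∧ ¬ ∃ m ∈ S.pairs, m.1 < u ∧ u < m.2
/-- Motif m₅ : a tree node (possibly the root) of degree greater than four. -/
def hasM5 (S : SecStr) : Prop := 4 < S.rootDeg ∨ ∃ p ∈ S.pairs, 4 < S.pairDeg p
/-- Motif m₃∘ : a node with an unpaired child and degree greater than two. -/
def hasM3o (S : SecStr) : Prop :=
  (∃ q ∈ S.pairs, (∃ u, S.unpChildOfPair q u) ∧ 2 < S.pairDeg q) ∨
  ((∃ u, S.unpChildOfRoot u) ∧ 2 < S.rootDeg)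

/- Colorings of the tree representation. -/
inductive Col | black | white | gray
deriving DecidableEq

noncomputable def childCount (S : SecStr) (col : ℕ × ℕ → Col) (q : ℕ × ℕ) (c : Col) : ℕ :=
  (S.pairs.filter (fun p => S.isParentOf q p ∧ col p = c)).card
noncomputable def rootChildCount (S : SecStr) (col : ℕ × ℕ → Col) (c : Col) : ℕ :=
  (S.pairs.filter (fun p => ¬ S.hasParent p ∧ col p = c)).card

/-- A proper coloring of the tree representation. -/
def properCol (S : SecStr) (col : ℕ × ℕ → Col) : Prop :=
  rootChildCount S col .black ≤ 1 ∧ rootChildCount S col .white ≤ 1 ∧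
  rootChildCount S col .gray ≤ 2 ∧
  ∀ q ∈ S.pairs,
    childCount S col q .black ≤ 1 ∧ childCount S col q .white ≤ 1 ∧
    childCount S col q .gray ≤ 2 ∧
    childCount S col q (col q) ≤ 1 ∧
    (col q = .black → ∀ p ∈ S.pairs, S.isParentOf q p → col p ≠ .white) ∧
    (col q = .white → ∀ p ∈ S.pairs, S.isParentOf q p → col p ≠ .black)

/-- Level of a paired node: #black minus #white on the path to the root (incl. itself). -/
noncomputable def pairLvl (S : SecStr) (col : ℕ × ℕ → Col) (p : ℕ × ℕ) : ℤ :=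
  ((S.pairs.filter (fun q => q.1 ≤ p.1 ∧ p.2 ≤ q.2 ∧ col q = .black)).card : ℤ) -
  ((S.pairs.filter (fun q => q.1 ≤ p.1 ∧ p.2 ≤ q.2 ∧ col q = .white)).card : ℤ)
/-- Level of an unpaired node. -/
noncomputable def unpLvl (S : SecStr) (col : ℕ × ℕ → Col) (u : ℕ) : ℤ :=
  ((S.pairs.filter (fun q => q.1 < u ∧ u < q.2 ∧ col q = .black)).card : ℤ) -
  ((S.pairs.filter (fun q => q.1 < u ∧ u < q.2 ∧ col q = .white)).card : ℤ)

/-- Separated coloring: gray-node levels and unpaired-node levels are disjoint. -/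
def separatedCol (S : SecStr) (col : ℕ × ℕ → Col) : Prop :=
  ∀ p ∈ S.pairs, col p = .gray → ∀ u, S.unpairedAt u →
    pairLvl S col p ≠ unpLvl S col u

/-- A bipartite energy model: its compatibility graph is bipartite. -/
def Bipartite {α : Type*} (R : α → α → Prop) : Prop :=
  ∃ f : α → Bool, ∀ a b, R a b → f a ≠ f b

/-- The k-stutter of a sequence. -/
def stutterSeq {α : Type*} (w : List α) (k : ℕ) : List α :=
  w.flatMap (fun a => List.replicate k a)
/-- The base pairs of the k-stutter of a structure. -/
def stutterPairs (S : SecStr) (k : ℕ) : Finset (ℕ × ℕ) :=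
  S.pairs.biUnion (fun p => (Finset.range k).image
    (fun m => (k * p.1 + m, k * p.2 + (k - 1 - m))))

/-- Two base pairs belong to the same band (maximal stack) of S. -/
def sameBand (S : SecStr) (p p' : ℕ × ℕ) : Prop :=
  p ∈ S.pairs ∧ p' ∈ S.pairs ∧ p.1 + p.2 = p'.1 + p'.2 ∧
  ∀ x, min p.1 p'.1 ≤ x → x ≤ max p.1 p'.1 → (x, p.1 + p.2 - x) ∈ S.pairs

/-- Nussinov-Jacobson energies: a for G-C, b for A-U, g for G-U. -/
def njE (a b g : ℝ) : Base → Base → ℝ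
  | .G, .C => a | .C, .G => a
  | .A, .U => b | .U, .A => b
  | .G, .U => g | .U, .G => g
  | _, _ => 0

/-- level of position i : #G minus #C in the prefix of w ending at i. -/
def lvl (w : List Base) (i : ℕ) : ℤ :=
  ((w.take (i+1)).count Base.G : ℤ) - ((w.take (i+1)).count Base.C : ℤ)
section Dev
variable {S : SecStr}

/-- Distinct pairs have all-distinct endpoints; hence a pair is determined by either endpoint. -/
lemma pair_eq_of_fst (hp : p ∈ S.pairs) (hq : q ∈ S.pairs) (h : p.1 = q.1) : p = q := by
  by_contra hne; exact (S.once p hp q hq hne).1 h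

lemma pair_eq_of_snd (hp : p ∈ S.pairs) (hq : q ∈ S.pairs) (h : p.2 = q.2) : p = q := by
  by_contra hne; exact (S.once p hp q hq hne).2.2.2 h

lemma fst_ne_snd (hp : p ∈ S.pairs) (hq : q ∈ S.pairs) : p.1 ≠ q.2 := by
  by_cases hne : p = q
  · subst hne; exact Nat.ne_of_lt (S.lt p hp)
  · exact (S.once p hp q hq hne).2.1

/-- uniqueness of the pair containing a given position -/
lemma pair_unique (hp : p ∈ S.pairs) (hq : q ∈ S.pairs)
    (h1 : p.1 = i ∨ p.2 = i) (h2 : q.1 = i ∨ q.2 = i) : p = q := by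
  rcases h1 with h1 | h1 <;> rcases h2 with h2 | h2
  · exact pair_eq_of_fst hp hq (h1.trans h2.symm)
  · exact absurd (h1.trans h2.symm) (fst_ne_snd hp hq)
  · exact absurd (h2.trans h1.symm) (fst_ne_snd hq hp)
  · exact pair_eq_of_snd hp hq (h1.trans h2.symm)

/-- two pairs are nested or disjoint -/
lemma nest_or_disj (hp : p ∈ S.pairs) (hq : q ∈ S.pairs) (hne : p ≠ q) (h1 : p.1 < q.1) :
    (q.2 < p.2) ∨ (p.2 < q.1) := by
  have h4 := S.once p hp q hq hne
  have hnc := S.noncross p hp q hq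
  have hlt := S.lt q hq
  by_cases h : q.1 < p.2
  · left
    rcases Nat.lt_or_ge q.2 p.2 with h' | h'
    · exact h'
    · exact absurd ⟨h1, h, lt_of_le_of_ne' h' (Ne.symm h4.2.2.2)⟩ hnc
  · right; have := h4.2.2.1; omega

/-- if q lies (weakly) inside p's interval on the left then q is inside p -/
lemma inside_of_left (hp : p ∈ S.pairs) (hq : q ∈ S.pairs) (h1 : p.1 < q.1) (h2 : q.1 < p.2) :
    q.2 < p.2 := by
  have hne : p ≠ q := fun h => by subst h; omega
  rcases nest_or_disj hp hq hne h1 with h | h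
  · exact h
  · omega

/-- two pairs enclosing a common pair are nested -/
lemma encl_nested (hp : p ∈ S.pairs) (hq : q ∈ S.pairs) (hg : g ∈ S.pairs)
    (h1 : encloses p g) (h2 : encloses q g) (h : p.1 < q.1) : encloses p q := by
  obtain ⟨h11, h12⟩ := h1; obtain ⟨h21, h22⟩ := h2
  have hlt := S.lt g hg
  have := inside_of_left hp hq h (by omega)
  exact ⟨h, this⟩

/-- existence of the (innermost) parent -/
lemma parent_exists (hg : g ∈ S.pairs) (h : S.hasParent g) : ∃ P, S.isParentOf P g := by
  classical
  obtain ⟨q, hq, hqg⟩ := h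
  have hne : (S.pairs.filter (fun q => encloses q g)).Nonempty :=
    ⟨q, Finset.mem_filter.2 ⟨hq, hqg⟩⟩
  obtain ⟨P, hP, hPmax⟩ := Finset.exists_max_image _ (fun q => q.1) hne
  rw [Finset.mem_filter] at hP
  refine ⟨P, hP.1, hg, hP.2, ?_⟩
  rintro ⟨m, hm, hPm, hmg⟩
  have : m ∈ S.pairs.filter (fun q => encloses q g) := Finset.mem_filter.2 ⟨hm, hmg⟩
  have := hPmax m this
  obtain ⟨h1, h2⟩ := hPm
  omega

lemma parent_unique (h1 : S.isParentOf P g) (h2 : S.isParentOf Q g) : P = Q := by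
  obtain ⟨hP, hg, hPg, hPn⟩ := h1
  obtain ⟨hQ, -, hQg, hQn⟩ := h2
  by_contra hne
  rcases Nat.lt_trichotomy P.1 Q.1 with h | h | h
  · exact hPn ⟨Q, hQ, encl_nested hP hQ hg hPg hQg h, hQg⟩
  · exact hne (pair_eq_of_fst hP hQ h)
  · exact hQn ⟨P, hP, encl_nested hQ hP hg hQg hPg h, hPg⟩

/-- the set of pairs q enclosing-or-equal g such that everything between q and g is gray -/
noncomputable def chainT (S : SecStr) (col : ℕ × ℕ → Col) (g : ℕ × ℕ) : Finset (ℕ × ℕ) :=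
  S.pairs.filter (fun q => q.1 ≤ g.1 ∧ g.2 ≤ q.2 ∧
    ∀ r ∈ S.pairs, q.1 ≤ r.1 → r.1 ≤ g.1 → g.2 ≤ r.2 → r.2 ≤ q.2 → col r = Col.gray)

lemma self_mem_chainT (hg : g ∈ S.pairs) (hcg : col g = Col.gray) : g ∈ chainT S col g := by
  refine Finset.mem_filter.2 ⟨hg, le_refl _, le_refl _, fun r hr h1 h2 h3 h4 => ?_⟩
  have : r = g := pair_eq_of_fst hr hg (le_antisymm h2 h1)
  rwa [this]

/-- the top of the maximal all-gray chain above g -/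
noncomputable def grayTop (S : SecStr) (col : ℕ × ℕ → Col) (g : ℕ × ℕ) : ℕ × ℕ :=
  if h : (chainT S col g).Nonempty then
    (Finset.exists_min_image (chainT S col g) (fun q => q.1) h).choose
  else g

lemma grayTop_spec (hg : g ∈ S.pairs) (hcg : col g = Col.gray) :
    grayTop S col g ∈ chainT S col g ∧ ∀ q ∈ chainT S col g, (grayTop S col g).1 ≤ q.1 := by
  have hne : (chainT S col g).Nonempty := ⟨g, self_mem_chainT hg hcg⟩
  rw [grayTop, dif_pos hne]
  exact (Finset.exists_min_image (chainT S col g) (fun q => q.1) hne).choose_spec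

/-- g has an earlier gray sibling (or earlier gray root-level pair) -/
def egs (S : SecStr) (col : ℕ × ℕ → Col) (g : ℕ × ℕ) : Prop :=
  ∃ q ∈ S.pairs, col q = Col.gray ∧ q.2 < g.1 ∧
    ((¬ S.hasParent g ∧ ¬ S.hasParent q) ∨ ∃ P, S.isParentOf P q ∧ S.isParentOf P g)

/-- orientation of a gray pair: `true` means U at the opening, A at the closing -/
noncomputable def ori (S : SecStr) (col : ℕ × ℕ → Col) (g : ℕ × ℕ) : Prop :=
  ¬ egs S col (grayTop S col g)

variable {col : ℕ × ℕ → Col}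

lemma chainT_mono_child (hgg' : S.isParentOf g g') (hcg : col g = Col.gray)
    (hcg' : col g' = Col.gray) :
    ∀ q ∈ chainT S col g, q ∈ chainT S col g' := by
  intro q hq
  obtain ⟨hgm, hg'm, ⟨he1, he2⟩, hnint⟩ := hgg'
  simp only [chainT, Finset.mem_filter] at hq ⊢
  obtain ⟨hqm, hq1, hq2, hbet⟩ := hq
  have hltg' := S.lt g' hg'm
  have hltg := S.lt g hgm
  refine ⟨hqm, by omega, by omega, ?_⟩
  intro r hrm h1 h2 h3 h4
  by_cases hr1 : r.1 = g'.1
  · rwa [pair_eq_of_fst hrm hg'm hr1]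
  have hr1' : r.1 < g'.1 := lt_of_le_of_ne h2 hr1
  have hrg' : g'.2 < r.2 := by
    rcases eq_or_lt_of_le h3 with h | h
    · exact absurd (pair_eq_of_snd hrm hg'm h.symm) (by intro hh; exact hr1 (by rw [hh]))
    · exact h
  by_cases hr2 : r.1 ≤ g.1
  · rcases eq_or_lt_of_le hr2 with h | h
    · rw [pair_eq_of_fst hrm hgm h]; exact hcg
    · have hnc : ¬ (r.1 < g.1 ∧ g.1 < r.2 ∧ r.2 < g.2) := S.noncross r hrm g hgm
      have hg1r2 : g.1 < r.2 := by omega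
      have hle : g.2 ≤ r.2 := by
        by_contra hc; push_neg at hc; exact hnc ⟨h, hg1r2, hc⟩
      rcases eq_or_lt_of_le hle with h' | h'
      · exfalso; have hge := pair_eq_of_snd hgm hrm h'; rw [hge] at h
        exact absurd h (lt_irrefl _)
      · exact hbet r hrm h1 (le_of_lt h) (le_of_lt h') h4
  · push_neg at hr2
    have hcross : ¬ (g.1 < r.1 ∧ r.1 < g.2 ∧ g.2 < r.2) := S.noncross g hgm r hrm
    have hrlt : r.1 < g.2 := by omega
    have hr2g : r.2 < g.2 := by
      have hne : r ≠ g := by intro h; rw [h] at hr2; omega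
      rcases Nat.lt_trichotomy r.2 g.2 with h | h | h
      · exact h
      · exact absurd (pair_eq_of_snd hrm hgm h) hne
      · exact absurd ⟨hr2, hrlt, h⟩ hcross
    exact (hnint ⟨r, hrm, ⟨hr2, hr2g⟩, ⟨hr1', hrg'⟩⟩).elim

lemma chainT_of_child (hgg' : S.isParentOf g g') (hcg : col g = Col.gray)
    (hq : q ∈ chainT S col g') (hne : q ≠ g') : q ∈ chainT S col g := by
  obtain ⟨hgm, hg'm, ⟨he1, he2⟩, hnint⟩ := hgg'
  simp only [chainT, Finset.mem_filter] at hq ⊢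
  obtain ⟨hqm, hq1, hq2, hbet⟩ := hq
  have hltg' := S.lt g' hg'm
  have hltg := S.lt g hgm
  have hq1' : q.1 < g'.1 := lt_of_le_of_ne hq1 (fun h => hne (pair_eq_of_fst hqm hg'm h))
  have hq2' : g'.2 < q.2 := lt_of_le_of_ne hq2
    (fun h => hne (pair_eq_of_snd hqm hg'm h.symm))
  -- first establish q.1 ≤ g.1
  have hkey : q.1 ≤ g.1 := by
    by_contra hc; push_neg at hc
    have hcross : ¬ (g.1 < q.1 ∧ q.1 < g.2 ∧ g.2 < q.2) := S.noncross g hgm q hqm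
    have hqlt : q.1 < g.2 := by omega
    have hq2g : q.2 < g.2 := by
      have hne' : q ≠ g := by intro h; rw [h] at hc; omega
      rcases Nat.lt_trichotomy q.2 g.2 with h | h | h
      · exact h
      · exact absurd (pair_eq_of_snd hqm hgm h) hne'
      · exact absurd ⟨hc, hqlt, h⟩ hcross
    exact (hnint ⟨q, hqm, ⟨hc, hq2g⟩, ⟨hq1', hq2'⟩⟩).elim
  have hkey2 : g.2 ≤ q.2 := by
    rcases eq_or_lt_of_le hkey with h | h
    · rw [pair_eq_of_fst hgm hqm h.symm]
    · have hnc : ¬ (q.1 < g.1 ∧ g.1 < q.2 ∧ q.2 < g.2) := S.noncross q hqm g hgm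
      have : g.1 < q.2 := by omega
      by_contra hc; push_neg at hc; exact hnc ⟨h, this, hc⟩
  refine ⟨hqm, hkey, hkey2, ?_⟩
  intro r hrm h1 h2 h3 h4
  exact hbet r hrm h1 (by omega) (by omega) h4

lemma grayTop_child (hgg' : S.isParentOf g g') (hcg : col g = Col.gray)
    (hcg' : col g' = Col.gray) : grayTop S col g' = grayTop S col g := by
  have hgm := hgg'.1
  have hg'm := hgg'.2.1
  have he1 := hgg'.2.2.1.1
  obtain ⟨ht, htmin⟩ := grayTop_spec (col := col) hgm hcg
  obtain ⟨ht', ht'min⟩ := grayTop_spec (col := col) hg'm hcg'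
  have htc : grayTop S col g ∈ chainT S col g' := chainT_mono_child hgg' hcg hcg' _ ht
  have h1 : (grayTop S col g').1 ≤ (grayTop S col g).1 := ht'min _ htc
  by_cases hne : grayTop S col g' = g'
  · exfalso
    have : (grayTop S col g).1 ≤ g.1 := (Finset.mem_filter.1 ht).2.1
    rw [hne] at h1; omega
  · have h2 : grayTop S col g' ∈ chainT S col g := chainT_of_child hgg' hcg ht' hne
    have h3 : (grayTop S col g).1 ≤ (grayTop S col g').1 := htmin _ h2
    have hmem1 : grayTop S col g ∈ S.pairs := (Finset.mem_filter.1 ht).1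
    have hmem2 : grayTop S col g' ∈ S.pairs := (Finset.mem_filter.1 ht').1
    exact pair_eq_of_fst hmem2 hmem1 (le_antisymm h1 h3)

lemma grayTop_eq_self (hgm : g ∈ S.pairs) (hcg : col g = Col.gray)
    (h : ∀ P, S.isParentOf P g → col P ≠ Col.gray) : grayTop S col g = g := by
  obtain ⟨ht, htmin⟩ := grayTop_spec (col := col) hgm hcg
  set t := grayTop S col g with hdef
  simp only [chainT, Finset.mem_filter] at ht
  obtain ⟨htm, ht1, ht2, hbet⟩ := ht
  by_contra hne
  have ht1' : t.1 < g.1 := lt_of_le_of_ne ht1 (fun hh => hne (pair_eq_of_fst htm hgm hh))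
  have ht2' : g.2 < t.2 := lt_of_le_of_ne ht2 (fun hh => hne (pair_eq_of_snd htm hgm hh.symm))
  have hhp : S.hasParent g := ⟨t, htm, ht1', ht2'⟩
  obtain ⟨P, hP⟩ := parent_exists hgm hhp
  obtain ⟨hPm, -, ⟨hP1, hP2⟩, hPn⟩ := hP
  -- t.1 ≤ P.1 and P.2 ≤ t.2
  have htP : t.1 ≤ P.1 ∧ P.2 ≤ t.2 := by
    rcases Nat.lt_trichotomy t.1 P.1 with hh | hh | hh
    · have := encl_nested htm hPm hgm ⟨ht1', ht2'⟩ ⟨hP1, hP2⟩ hh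
      exact ⟨le_of_lt hh, le_of_lt this.2⟩
    · have : t = P := pair_eq_of_fst htm hPm hh
      rw [this]; exact ⟨le_refl _, le_refl _⟩
    · exfalso
      have := encl_nested hPm htm hgm ⟨hP1, hP2⟩ ⟨ht1', ht2'⟩ hh
      exact hPn ⟨t, htm, this, ⟨ht1', ht2'⟩⟩
  have : col P = Col.gray := hbet P hPm htP.1 (le_of_lt hP1) (le_of_lt hP2) htP.2
  exact h P ⟨hPm, hgm, ⟨hP1, hP2⟩, hPn⟩ this

lemma ori_inherit (hgg' : S.isParentOf g g') (hcg : col g = Col.gray)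
    (hcg' : col g' = Col.gray) : (ori S col g' ↔ ori S col g) := by
  rw [ori, ori, grayTop_child hgg' hcg hcg']

lemma ori_sib (hpc : properCol S col) (hpm : p ∈ S.pairs) (hqm : q ∈ S.pairs)
    (hcp : col p = Col.gray) (hcq : col q = Col.gray) (hlt : p.2 < q.1)
    (hsib : (¬ S.hasParent p ∧ ¬ S.hasParent q) ∨ ∃ P, S.isParentOf P p ∧ S.isParentOf P q) :
    ori S col p ∧ ¬ ori S col q := by
  have hltp := S.lt p hpm
  have hltq := S.lt q hqm
  have hpq : p ≠ q := by intro h; rw [h] at hlt; omega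
  -- gray tops are self
  have hgtp : grayTop S col p = p := by
    refine grayTop_eq_self hpm hcp (fun P hP hPc => ?_)
    rcases hsib with ⟨hnp, -⟩ | ⟨P', hP'p, hP'q⟩
    · exact hnp ⟨P, hP.1, hP.2.2.1⟩
    · have heq : P = P' := parent_unique hP hP'p
      rw [heq] at hP hPc
      -- P' is gray with two gray children p, q : contradiction with childCount ≤ 1
      have hcc := (hpc.2.2.2 P' hP.1).2.2.2.1
      rw [hPc] at hcc
      have h2 : 1 < (S.pairs.filter (fun c => S.isParentOf P' c ∧ col c = Col.gray)).card := by
        rw [Finset.one_lt_card]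
        exact ⟨p, Finset.mem_filter.2 ⟨hpm, hP'p, hcp⟩, q, Finset.mem_filter.2 ⟨hqm, hP'q, hcq⟩, hpq⟩
      rw [childCount] at hcc; omega
  have hgtq : grayTop S col q = q := by
    refine grayTop_eq_self hqm hcq (fun P hP hPc => ?_)
    rcases hsib with ⟨-, hnq⟩ | ⟨P', hP'p, hP'q⟩
    · exact hnq ⟨P, hP.1, hP.2.2.1⟩
    · have heq : P = P' := parent_unique hP hP'q
      rw [heq] at hP hPc
      have hcc := (hpc.2.2.2 P' hP.1).2.2.2.1
      rw [hPc] at hcc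
      have h2 : 1 < (S.pairs.filter (fun c => S.isParentOf P' c ∧ col c = Col.gray)).card := by
        rw [Finset.one_lt_card]
        exact ⟨p, Finset.mem_filter.2 ⟨hpm, hP'p, hcp⟩, q, Finset.mem_filter.2 ⟨hqm, hP'q, hcq⟩, hpq⟩
      rw [childCount] at hcc; omega
  constructor
  · -- ori p : no earlier gray sibling of p
    rw [ori, hgtp]
    rintro ⟨r, hrm, hcr, hrlt, hrs⟩
    have hrp : r ≠ p := by intro h; rw [h] at hrlt; omega
    have hrq : r ≠ q := by intro h; rw [h] at hrlt; omega
    rcases hsib with ⟨hnp, hnq⟩ | ⟨P, hPp, hPq⟩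
    · rcases hrs with ⟨-, hnr⟩ | ⟨P', hP'r, hP'p⟩
      · -- three gray root pairs
        have hcc := hpc.2.2.1
        have h3 : 2 < (S.pairs.filter (fun c => ¬ S.hasParent c ∧ col c = Col.gray)).card := by
          rw [Finset.two_lt_card]
          exact ⟨r, Finset.mem_filter.2 ⟨hrm, hnr, hcr⟩, p, Finset.mem_filter.2 ⟨hpm, hnp, hcp⟩,
            q, Finset.mem_filter.2 ⟨hqm, hnq, hcq⟩, hrp, hrq, hpq⟩
        rw [rootChildCount] at hcc; omega
      · exact hnp ⟨P', hP'p.1, hP'p.2.2.1⟩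
    · rcases hrs with ⟨hnp, -⟩ | ⟨P', hP'r, hP'p⟩
      · exact hnp ⟨P, hPp.1, hPp.2.2.1⟩
      · have heq : P' = P := parent_unique hP'p hPp
        rw [heq] at hP'r
        have hcc := (hpc.2.2.2 P hPp.1).2.2.1
        have h3 : 2 < (S.pairs.filter (fun c => S.isParentOf P c ∧ col c = Col.gray)).card := by
          rw [Finset.two_lt_card]
          exact ⟨r, Finset.mem_filter.2 ⟨hrm, hP'r, hcr⟩, p, Finset.mem_filter.2 ⟨hpm, hPp, hcp⟩,
            q, Finset.mem_filter.2 ⟨hqm, hPq, hcq⟩, hrp, hrq, hpq⟩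
        rw [childCount] at hcc; omega
  · -- ¬ ori q : p is an earlier gray sibling of q
    rw [ori, hgtq, not_not]
    exact ⟨p, hpm, hcp, hlt, hsib.imp (fun h => ⟨h.2, h.1⟩) id⟩

noncomputable def openLetter (S : SecStr) (col : ℕ × ℕ → Col) (p : ℕ × ℕ) : Base :=
  match col p with
  | Col.black => Base.G
  | Col.white => Base.C
  | Col.gray => if ori S col p then Base.U else Base.A

noncomputable def closeLetter (S : SecStr) (col : ℕ × ℕ → Col) (p : ℕ × ℕ) : Base :=
  match col p with
  | Col.black => Base.C
  | Col.white => Base.G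
  | Col.gray => if ori S col p then Base.A else Base.U

noncomputable def letter (S : SecStr) (col : ℕ × ℕ → Col) (i : ℕ) : Base :=
  if h1 : ∃ p, p ∈ S.pairs ∧ p.1 = i then openLetter S col h1.choose
  else if h2 : ∃ p, p ∈ S.pairs ∧ p.2 = i then closeLetter S col h2.choose
  else Base.A

lemma letter_open (hp : p ∈ S.pairs) : letter S col p.1 = openLetter S col p := by
  have h1 : ∃ q, q ∈ S.pairs ∧ q.1 = p.1 := ⟨p, hp, rfl⟩
  rw [letter, dif_pos h1]
  congr 1
  exact pair_eq_of_fst h1.choose_spec.1 hp h1.choose_spec.2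

lemma letter_close (hp : p ∈ S.pairs) : letter S col p.2 = closeLetter S col p := by
  have h1 : ¬ ∃ q, q ∈ S.pairs ∧ q.1 = p.2 := by
    rintro ⟨q, hq, hq1⟩; exact fst_ne_snd hq hp hq1
  have h2 : ∃ q, q ∈ S.pairs ∧ q.2 = p.2 := ⟨p, hp, rfl⟩
  rw [letter, dif_neg h1, dif_pos h2]
  congr 1
  exact pair_eq_of_snd h2.choose_spec.1 hp h2.choose_spec.2

lemma letter_unpaired (h : ¬ S.pairedAt i) : letter S col i = Base.A := by
  have h1 : ¬ ∃ q, q ∈ S.pairs ∧ q.1 = i := by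
    rintro ⟨q, hq, hq1⟩; exact h ⟨q, hq, Or.inl hq1⟩
  have h2 : ¬ ∃ q, q ∈ S.pairs ∧ q.2 = i := by
    rintro ⟨q, hq, hq1⟩; exact h ⟨q, hq, Or.inr hq1⟩
  rw [letter, dif_neg h1, dif_neg h2]

/-- general inversion: a position's letter comes from its pair, or the position is unpaired -/
lemma letter_inv (S : SecStr) (col : ℕ × ℕ → Col) (i : ℕ) :
    (¬ S.pairedAt i ∧ letter S col i = Base.A) ∨
    (∃ p ∈ S.pairs, (p.1 = i ∧ letter S col i = openLetter S col p) ∨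
      (p.2 = i ∧ letter S col i = closeLetter S col p)) := by
  by_cases h1 : ∃ p, p ∈ S.pairs ∧ p.1 = i
  · obtain ⟨p, hp, hpi⟩ := h1
    right; exact ⟨p, hp, Or.inl ⟨hpi, by rw [← hpi, letter_open hp]⟩⟩
  · by_cases h2 : ∃ p, p ∈ S.pairs ∧ p.2 = i
    · obtain ⟨p, hp, hpi⟩ := h2
      right; exact ⟨p, hp, Or.inr ⟨hpi, by rw [← hpi, letter_close hp]⟩⟩
    · left
      constructor
      · rintro ⟨q, hq, hq1 | hq2⟩
        · exact h1 ⟨q, hq, hq1⟩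
        · exact h2 ⟨q, hq, hq2⟩
      · rw [letter, dif_neg h1, dif_neg h2]

lemma letter_G_inv (h : letter S col i = Base.G) :
    ∃ p ∈ S.pairs, (p.1 = i ∧ col p = Col.black) ∨ (p.2 = i ∧ col p = Col.white) := by
  rcases letter_inv S col i with ⟨-, hA⟩ | ⟨p, hp, ⟨hpi, hl⟩ | ⟨hpi, hl⟩⟩
  · rw [h] at hA; exact absurd hA (by simp)
  · rw [h] at hl
    rcases hc : col p
    · exact ⟨p, hp, Or.inl ⟨hpi, hc⟩⟩
    · exfalso; simp [openLetter, hc] at hl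
    · exfalso; simp only [openLetter, hc] at hl; split_ifs at hl <;> simp_all
  · rw [h] at hl
    rcases hc : col p
    · exfalso; simp [closeLetter, hc] at hl
    · exact ⟨p, hp, Or.inr ⟨hpi, hc⟩⟩
    · exfalso; simp only [closeLetter, hc] at hl; split_ifs at hl <;> simp_all

lemma letter_C_inv (h : letter S col i = Base.C) :
    ∃ p ∈ S.pairs, (p.2 = i ∧ col p = Col.black) ∨ (p.1 = i ∧ col p = Col.white) := by
  rcases letter_inv S col i with ⟨-, hA⟩ | ⟨p, hp, ⟨hpi, hl⟩ | ⟨hpi, hl⟩⟩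
  · rw [h] at hA; exact absurd hA (by simp)
  · rw [h] at hl
    rcases hc : col p
    · exfalso; simp [openLetter, hc] at hl
    · exact ⟨p, hp, Or.inr ⟨hpi, hc⟩⟩
    · exfalso; simp only [openLetter, hc] at hl; split_ifs at hl <;> simp_all
  · rw [h] at hl
    rcases hc : col p
    · exact ⟨p, hp, Or.inl ⟨hpi, hc⟩⟩
    · exfalso; simp [closeLetter, hc] at hl
    · exfalso; simp only [closeLetter, hc] at hl; split_ifs at hl <;> simp_all

lemma letter_U_inv (h : letter S col i = Base.U) :
    ∃ p ∈ S.pairs, col p = Col.gray ∧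
      ((p.1 = i ∧ ori S col p) ∨ (p.2 = i ∧ ¬ ori S col p)) := by
  rcases letter_inv S col i with ⟨-, hA⟩ | ⟨p, hp, ⟨hpi, hl⟩ | ⟨hpi, hl⟩⟩
  · rw [h] at hA; exact absurd hA (by simp)
  · rw [h] at hl
    rcases hc : col p
    · exfalso; simp [openLetter, hc] at hl
    · exfalso; simp [openLetter, hc] at hl
    · refine ⟨p, hp, hc, Or.inl ⟨hpi, ?_⟩⟩
      simp only [openLetter, hc] at hl
      by_cases ho : ori S col p
      · exact ho
      · rw [if_neg ho] at hl; exact Base.noConfusion hl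
  · rw [h] at hl
    rcases hc : col p
    · exfalso; simp [closeLetter, hc] at hl
    · exfalso; simp [closeLetter, hc] at hl
    · refine ⟨p, hp, hc, Or.inr ⟨hpi, ?_⟩⟩
      simp only [closeLetter, hc] at hl
      intro ho
      rw [if_pos ho] at hl; exact Base.noConfusion hl

lemma letter_A_inv (h : letter S col i = Base.A) :
    (¬ S.pairedAt i) ∨ ∃ p ∈ S.pairs, col p = Col.gray ∧
      ((p.1 = i ∧ ¬ ori S col p) ∨ (p.2 = i ∧ ori S col p)) := by
  rcases letter_inv S col i with ⟨hup, -⟩ | ⟨p, hp, ⟨hpi, hl⟩ | ⟨hpi, hl⟩⟩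
  · exact Or.inl hup
  · rw [h] at hl
    rcases hc : col p
    · exfalso; simp [openLetter, hc] at hl
    · exfalso; simp [openLetter, hc] at hl
    · refine Or.inr ⟨p, hp, hc, Or.inl ⟨hpi, ?_⟩⟩
      simp only [openLetter, hc] at hl
      intro ho
      rw [if_pos ho] at hl; exact Base.noConfusion hl
  · rw [h] at hl
    rcases hc : col p
    · exfalso; simp [closeLetter, hc] at hl
    · exfalso; simp [closeLetter, hc] at hl
    · refine Or.inr ⟨p, hp, hc, Or.inr ⟨hpi, ?_⟩⟩
      simp only [closeLetter, hc] at hl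
      by_cases ho : ori S col p
      · exact ho
      · rw [if_neg ho] at hl; exact Base.noConfusion hl

noncomputable def pairAt (S : SecStr) (i : ℕ) : ℕ × ℕ :=
  if h : S.pairedAt i then h.choose else (0, 0)

lemma pairAt_eq (hp : p ∈ S.pairs) (h : p.1 = i ∨ p.2 = i) : pairAt S i = p := by
  have hpa : S.pairedAt i := ⟨p, hp, h⟩
  rw [pairAt, dif_pos hpa]
  exact pair_unique hpa.choose_spec.1 hp hpa.choose_spec.2 h

/-- count of letter b among positions < n -/
noncomputable def cnt (S : SecStr) (col : ℕ × ℕ → Col) (b : Base) (n : ℕ) : ℕ :=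
  ((Finset.range n).filter (fun i => letter S col i = b)).card

lemma openLetter_black (hc : col p = Col.black) : openLetter S col p = Base.G := by
  simp [openLetter, hc]
lemma openLetter_white (hc : col p = Col.white) : openLetter S col p = Base.C := by
  simp [openLetter, hc]
lemma closeLetter_black (hc : col p = Col.black) : closeLetter S col p = Base.C := by
  simp [closeLetter, hc]
lemma closeLetter_white (hc : col p = Col.white) : closeLetter S col p = Base.G := by
  simp [closeLetter, hc]

lemma cnt_G (n : ℕ) : cnt S col Base.G n
    = (S.pairs.filter (fun q => col q = Col.black ∧ q.1 < n)).card
    + (S.pairs.filter (fun q => col q = Col.white ∧ q.2 < n)).card := by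
  classical
  have hdisj : Disjoint (S.pairs.filter (fun q => col q = Col.black ∧ q.1 < n))
      (S.pairs.filter (fun q => col q = Col.white ∧ q.2 < n)) := by
    rw [Finset.disjoint_left]
    intro a ha hb
    rw [Finset.mem_filter] at ha hb
    rw [ha.2.1] at hb; exact Col.noConfusion hb.2.1
  rw [cnt, ← Finset.card_union_of_disjoint hdisj]
  apply Finset.card_nbij' (fun i => pairAt S i)
    (fun q => if col q = Col.black then q.1 else q.2)
  · intro i hi
    simp only [Finset.mem_coe] at hi ⊢
    rw [Finset.mem_filter, Finset.mem_range] at hi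
    obtain ⟨hin, hG⟩ := hi
    obtain ⟨q, hq, ⟨h1, hcq⟩ | ⟨h2, hcq⟩⟩ := letter_G_inv hG
    · rw [pairAt_eq hq (Or.inl h1)]; simp only [Finset.mem_union, Finset.mem_filter]
      exact Or.inl ⟨hq, hcq, by omega⟩
    · rw [pairAt_eq hq (Or.inr h2)]; simp only [Finset.mem_union, Finset.mem_filter]
      exact Or.inr ⟨hq, hcq, by omega⟩
  · intro q hq
    simp only [Finset.mem_coe] at hq ⊢
    simp only [Finset.mem_union, Finset.mem_filter] at hq
    rcases hq with ⟨hq, hc, hn⟩ | ⟨hq, hc, hn⟩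
    · rw [if_pos hc, Finset.mem_filter, Finset.mem_range]
      exact ⟨hn, by rw [letter_open hq, openLetter_black hc]⟩
    · rw [if_neg (by rw [hc]; exact Col.noConfusion), Finset.mem_filter, Finset.mem_range]
      exact ⟨hn, by rw [letter_close hq, closeLetter_white hc]⟩
  · intro i hi
    simp only [Finset.mem_coe] at hi ⊢
    rw [Finset.mem_filter, Finset.mem_range] at hi
    obtain ⟨q, hq, ⟨h1, hcq⟩ | ⟨h2, hcq⟩⟩ := letter_G_inv hi.2
    · rw [pairAt_eq hq (Or.inl h1), if_pos hcq]; exact h1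
    · rw [pairAt_eq hq (Or.inr h2), if_neg (by rw [hcq]; exact Col.noConfusion)]; exact h2
  · intro q hq
    simp only [Finset.mem_coe] at hq ⊢
    simp only [Finset.mem_union, Finset.mem_filter] at hq
    rcases hq with ⟨hq, hc, hn⟩ | ⟨hq, hc, hn⟩
    · rw [if_pos hc]; exact pairAt_eq hq (Or.inl rfl)
    · rw [if_neg (by rw [hc]; exact Col.noConfusion)]; exact pairAt_eq hq (Or.inr rfl)

lemma cnt_C (n : ℕ) : cnt S col Base.C n
    = (S.pairs.filter (fun q => col q = Col.black ∧ q.2 < n)).card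
    + (S.pairs.filter (fun q => col q = Col.white ∧ q.1 < n)).card := by
  classical
  have hdisj : Disjoint (S.pairs.filter (fun q => col q = Col.black ∧ q.2 < n))
      (S.pairs.filter (fun q => col q = Col.white ∧ q.1 < n)) := by
    rw [Finset.disjoint_left]
    intro a ha hb
    rw [Finset.mem_filter] at ha hb
    rw [ha.2.1] at hb; exact Col.noConfusion hb.2.1
  rw [cnt, ← Finset.card_union_of_disjoint hdisj]
  apply Finset.card_nbij' (fun i => pairAt S i)
    (fun q => if col q = Col.black then q.2 else q.1)
  · intro i hi
    simp only [Finset.mem_coe] at hi ⊢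
    rw [Finset.mem_filter, Finset.mem_range] at hi
    obtain ⟨hin, hG⟩ := hi
    obtain ⟨q, hq, ⟨h1, hcq⟩ | ⟨h2, hcq⟩⟩ := letter_C_inv hG
    · rw [pairAt_eq hq (Or.inr h1)]; simp only [Finset.mem_union, Finset.mem_filter]
      exact Or.inl ⟨hq, hcq, by omega⟩
    · rw [pairAt_eq hq (Or.inl h2)]; simp only [Finset.mem_union, Finset.mem_filter]
      exact Or.inr ⟨hq, hcq, by omega⟩
  · intro q hq
    simp only [Finset.mem_coe] at hq ⊢
    simp only [Finset.mem_union, Finset.mem_filter] at hq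
    rcases hq with ⟨hq, hc, hn⟩ | ⟨hq, hc, hn⟩
    · rw [if_pos hc, Finset.mem_filter, Finset.mem_range]
      exact ⟨hn, by rw [letter_close hq, closeLetter_black hc]⟩
    · rw [if_neg (by rw [hc]; exact Col.noConfusion), Finset.mem_filter, Finset.mem_range]
      exact ⟨hn, by rw [letter_open hq, openLetter_white hc]⟩
  · intro i hi
    simp only [Finset.mem_coe] at hi ⊢
    rw [Finset.mem_filter, Finset.mem_range] at hi
    obtain ⟨q, hq, ⟨h1, hcq⟩ | ⟨h2, hcq⟩⟩ := letter_C_inv hi.2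
    · rw [pairAt_eq hq (Or.inr h1), if_pos hcq]; exact h1
    · rw [pairAt_eq hq (Or.inl h2), if_neg (by rw [hcq]; exact Col.noConfusion)]; exact h2
  · intro q hq
    simp only [Finset.mem_coe] at hq ⊢
    simp only [Finset.mem_union, Finset.mem_filter] at hq
    rcases hq with ⟨hq, hc, hn⟩ | ⟨hq, hc, hn⟩
    · rw [if_pos hc]; exact pairAt_eq hq (Or.inr rfl)
    · rw [if_neg (by rw [hc]; exact Col.noConfusion)]; exact pairAt_eq hq (Or.inl rfl)

/-- total number of U positions equals the number of gray pairs -/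
lemma cnt_U : cnt S col Base.U S.len
    = (S.pairs.filter (fun q => col q = Col.gray)).card := by
  classical
  rw [cnt]
  apply Finset.card_nbij' (fun i => pairAt S i)
    (fun q => if ori S col q then q.1 else q.2)
  · intro i hi
    simp only [Finset.mem_coe] at hi ⊢
    rw [Finset.mem_filter, Finset.mem_range] at hi
    obtain ⟨q, hq, hcq, ⟨h1, _⟩ | ⟨h2, _⟩⟩ := letter_U_inv hi.2
    · rw [pairAt_eq hq (Or.inl h1), Finset.mem_filter]; exact ⟨hq, hcq⟩
    · rw [pairAt_eq hq (Or.inr h2), Finset.mem_filter]; exact ⟨hq, hcq⟩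
  · intro q hq
    simp only [Finset.mem_coe] at hq ⊢
    rw [Finset.mem_filter] at hq
    obtain ⟨hq, hcq⟩ := hq
    by_cases ho : ori S col q
    · rw [if_pos ho, Finset.mem_filter, Finset.mem_range]
      refine ⟨lt_trans (S.lt q hq) (S.ub q hq), ?_⟩
      rw [letter_open hq]; simp [openLetter, hcq, ho]
    · rw [if_neg ho, Finset.mem_filter, Finset.mem_range]
      refine ⟨S.ub q hq, ?_⟩
      rw [letter_close hq]; simp [closeLetter, hcq, ho]
  · intro i hi
    simp only [Finset.mem_coe] at hi ⊢
    rw [Finset.mem_filter, Finset.mem_range] at hi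
    obtain ⟨q, hq, hcq, ⟨h1, ho⟩ | ⟨h2, ho⟩⟩ := letter_U_inv hi.2
    · rw [pairAt_eq hq (Or.inl h1), if_pos ho]; exact h1
    · rw [pairAt_eq hq (Or.inr h2), if_neg ho]; exact h2
  · intro q hq
    simp only [Finset.mem_coe] at hq ⊢
    rw [Finset.mem_filter] at hq
    by_cases ho : ori S col q
    · rw [if_pos ho]; exact pairAt_eq hq.1 (Or.inl rfl)
    · rw [if_neg ho]; exact pairAt_eq hq.1 (Or.inr rfl)

/-- number of paired positions carrying letter A equals the number of gray pairs -/
lemma cnt_Agray : ((Finset.range S.len).filter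
      (fun i => letter S col i = Base.A ∧ S.pairedAt i)).card
    = (S.pairs.filter (fun q => col q = Col.gray)).card := by
  classical
  apply Finset.card_nbij' (fun i => pairAt S i)
    (fun q => if ori S col q then q.2 else q.1)
  · intro i hi
    simp only [Finset.mem_coe] at hi ⊢
    rw [Finset.mem_filter, Finset.mem_range] at hi
    rcases letter_A_inv hi.2.1 with hun | ⟨q, hq, hcq, ⟨h1, _⟩ | ⟨h2, _⟩⟩
    · exact absurd hi.2.2 hun
    · rw [pairAt_eq hq (Or.inl h1), Finset.mem_filter]; exact ⟨hq, hcq⟩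
    · rw [pairAt_eq hq (Or.inr h2), Finset.mem_filter]; exact ⟨hq, hcq⟩
  · intro q hq
    simp only [Finset.mem_coe] at hq ⊢
    rw [Finset.mem_filter] at hq
    obtain ⟨hq, hcq⟩ := hq
    by_cases ho : ori S col q
    · rw [if_pos ho, Finset.mem_filter, Finset.mem_range]
      refine ⟨S.ub q hq, ?_, ⟨q, hq, Or.inr rfl⟩⟩
      rw [letter_close hq]; simp [closeLetter, hcq, ho]
    · rw [if_neg ho, Finset.mem_filter, Finset.mem_range]
      refine ⟨lt_trans (S.lt q hq) (S.ub q hq), ?_, ⟨q, hq, Or.inl rfl⟩⟩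
      rw [letter_open hq]; simp [openLetter, hcq, ho]
  · intro i hi
    simp only [Finset.mem_coe] at hi ⊢
    rw [Finset.mem_filter, Finset.mem_range] at hi
    rcases letter_A_inv hi.2.1 with hun | ⟨q, hq, hcq, ⟨h1, ho⟩ | ⟨h2, ho⟩⟩
    · exact absurd hi.2.2 hun
    · rw [pairAt_eq hq (Or.inl h1), if_neg ho]; exact h1
    · rw [pairAt_eq hq (Or.inr h2), if_pos ho]; exact h2
  · intro q hq
    simp only [Finset.mem_coe] at hq ⊢
    rw [Finset.mem_filter] at hq
    by_cases ho : ori S col q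
    · rw [if_pos ho]; exact pairAt_eq hq.1 (Or.inr rfl)
    · rw [if_neg ho]; exact pairAt_eq hq.1 (Or.inl rfl)

/-- the level just before position n : #G - #C among positions < n -/
noncomputable def lam (S : SecStr) (col : ℕ × ℕ → Col) (n : ℕ) : ℤ :=
  (cnt S col Base.G n : ℤ) - cnt S col Base.C n

lemma split_card (c : Col) (n : ℕ) :
    (S.pairs.filter (fun q => col q = c ∧ q.1 < n)).card
    = (S.pairs.filter (fun q => col q = c ∧ q.2 < n)).card
    + (S.pairs.filter (fun q => col q = c ∧ q.1 < n ∧ n ≤ q.2)).card := by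
  classical
  have hdisj : Disjoint (S.pairs.filter (fun q => col q = c ∧ q.2 < n))
      (S.pairs.filter (fun q => col q = c ∧ q.1 < n ∧ n ≤ q.2)) := by
    rw [Finset.disjoint_left]
    intro a ha hb
    rw [Finset.mem_filter] at ha hb
    omega
  rw [← Finset.card_union_of_disjoint hdisj]
  congr 1
  ext q
  simp only [Finset.mem_union, Finset.mem_filter]
  constructor
  · rintro ⟨hq, hc, h1⟩
    by_cases h2 : q.2 < n
    · exact Or.inl ⟨hq, hc, h2⟩
    · exact Or.inr ⟨hq, hc, h1, by omega⟩
  · rintro (⟨hq, hc, h2⟩ | ⟨hq, hc, h1, h2⟩)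
    · exact ⟨hq, hc, lt_trans (S.lt q hq) h2⟩
    · exact ⟨hq, hc, h1⟩

lemma lam_eq (n : ℕ) : lam S col n
    = ((S.pairs.filter (fun q => col q = Col.black ∧ q.1 < n ∧ n ≤ q.2)).card : ℤ)
    - (S.pairs.filter (fun q => col q = Col.white ∧ q.1 < n ∧ n ≤ q.2)).card := by
  rw [lam, cnt_G, cnt_C, split_card Col.black n, split_card Col.white n]
  push_cast
  ring

lemma enc_filter_gray (hg : g ∈ S.pairs) (hcg : col g = Col.gray) (c : Col)
    (hc : c ≠ Col.gray) (z : ℕ) (hz : z = g.1 ∨ z = g.1 + 1 ∨ z = g.2 ∨ z = g.2 + 1) :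
    S.pairs.filter (fun q => col q = c ∧ q.1 < z ∧ z ≤ q.2)
    = S.pairs.filter (fun q => q.1 ≤ g.1 ∧ g.2 ≤ q.2 ∧ col q = c) := by
  have hltg := S.lt g hg
  ext q
  simp only [Finset.mem_filter]
  constructor
  · rintro ⟨hq, hcq, h1, h2⟩
    have hne : q ≠ g := by intro h; rw [h, hcg] at hcq; exact hc hcq.symm
    have h4 := S.once q hq g hg hne
    have hnc1 := S.noncross q hq g hg
    have hnc2 := S.noncross g hg q hq
    -- establish strict enclosure
    have henc : q.1 < g.1 ∧ g.2 < q.2 := by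
      rcases hz with hz | hz | hz | hz <;> subst hz
      · have hq1 : q.1 < g.1 := h1
        have hq2 : g.1 < q.2 := by have := h4.2.2.1; omega
        have : ¬ (q.1 < g.1 ∧ g.1 < q.2 ∧ q.2 < g.2) := hnc1
        have : g.2 ≤ q.2 := by omega
        have := h4.2.2.2; exact ⟨hq1, by omega⟩
      · have hq1 : q.1 < g.1 := by have := h4.1; omega
        have hq2 : g.1 < q.2 := by omega
        have : ¬ (q.1 < g.1 ∧ g.1 < q.2 ∧ q.2 < g.2) := hnc1
        have := h4.2.2.2; exact ⟨hq1, by omega⟩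
      · have hq2 : g.2 < q.2 := by have := h4.2.2.2; omega
        have hq1 : q.1 < g.1 := by
          rcases Nat.lt_trichotomy q.1 g.1 with h | h | h
          · exact h
          · exact absurd h (h4.1)
          · exact absurd ⟨h, by omega, hq2⟩ hnc2
        exact ⟨hq1, hq2⟩
      · have hq2 : g.2 < q.2 := by omega
        have hq1' : q.1 < g.2 := by have := h4.2.1; omega
        have hq1 : q.1 < g.1 := by
          rcases Nat.lt_trichotomy q.1 g.1 with h | h | h
          · exact h
          · exact absurd h (h4.1)
          · exact absurd ⟨h, hq1', hq2⟩ hnc2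
        exact ⟨hq1, hq2⟩
    exact ⟨hq, by omega, by omega, hcq⟩
  · rintro ⟨hq, h1, h2, hcq⟩
    have hne : q ≠ g := by intro h; rw [h, hcg] at hcq; exact hc hcq.symm
    have h4 := S.once q hq g hg hne
    have hq1 : q.1 < g.1 := by have := h4.1; omega
    have hq2 : g.2 < q.2 := by have := h4.2.2.2; omega
    refine ⟨hq, hcq, ?_, ?_⟩ <;> (rcases hz with hz | hz | hz | hz <;> omega)

lemma lam_gray (hg : g ∈ S.pairs) (hcg : col g = Col.gray) (z : ℕ)
    (hz : z = g.1 ∨ z = g.1 + 1 ∨ z = g.2 ∨ z = g.2 + 1) :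
    lam S col z = pairLvl S col g := by
  rw [lam_eq, pairLvl,
    enc_filter_gray hg hcg Col.black (by exact fun h => Col.noConfusion h) z hz,
    enc_filter_gray hg hcg Col.white (by exact fun h => Col.noConfusion h) z hz]

lemma enc_filter_unp (hu : ¬ S.pairedAt u) (c : Col) (z : ℕ) (hz : z = u ∨ z = u + 1) :
    S.pairs.filter (fun q => col q = c ∧ q.1 < z ∧ z ≤ q.2)
    = S.pairs.filter (fun q => q.1 < u ∧ u < q.2 ∧ col q = c) := by
  ext q
  simp only [Finset.mem_filter]
  constructor
  · rintro ⟨hq, hcq, h1, h2⟩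
    have hne1 : q.1 ≠ u := fun h => hu ⟨q, hq, Or.inl h⟩
    have hne2 : q.2 ≠ u := fun h => hu ⟨q, hq, Or.inr h⟩
    refine ⟨hq, by omega, by omega, hcq⟩
  · rintro ⟨hq, h1, h2, hcq⟩
    refine ⟨hq, hcq, by omega, by omega⟩

lemma lam_unp (hu : ¬ S.pairedAt u) (z : ℕ) (hz : z = u ∨ z = u + 1) :
    lam S col z = unpLvl S col u := by
  rw [lam_eq, unpLvl,
    enc_filter_unp hu Col.black z hz, enc_filter_unp hu Col.white z hz]

/-- the designed word -/
noncomputable def wseq (S : SecStr) (col : ℕ × ℕ → Col) : List Base :=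
  (List.range S.len).map (letter S col)

lemma wseq_length : (wseq S col).length = S.len := by simp [wseq]

lemma wseq_getD (h : i < S.len) : (wseq S col).getD i Base.A = letter S col i := by
  rw [wseq, List.getD_eq_getElem?_getD, List.getElem?_map, List.getElem?_range h]
  rfl

lemma default_base : (default : Base) = Base.A := rfl

lemma wc_open_close (hp : p ∈ S.pairs) :
    wcPair (letter S col p.1) (letter S col p.2) := by
  rw [letter_open hp, letter_close hp]
  rcases hc : col p
  · rw [openLetter_black hc, closeLetter_black hc]; trivial
  · rw [openLetter_white hc, closeLetter_white hc]; trivial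
  · by_cases ho : ori S col p
    · simp only [openLetter, closeLetter, hc, if_pos ho]; trivial
    · simp only [openLetter, closeLetter, hc, if_neg ho]; trivial

lemma pairAt_mem (h : S.pairedAt i) :
    pairAt S i ∈ S.pairs ∧ ((pairAt S i).1 = i ∨ (pairAt S i).2 = i) := by
  rw [pairAt, dif_pos h]
  exact ⟨h.choose_spec.1, h.choose_spec.2⟩

lemma if_endpoint {α : Type*} {c : Prop} [Decidable c] (a b : α) :
    (if c then a else b) = a ∨ (if c then a else b) = b := by
  split_ifs
  exacts [Or.inl rfl, Or.inr rfl]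

/-- the partner of a paired position -/
noncomputable def mate (M : SecStr) (i : ℕ) : ℕ :=
  if (pairAt M i).1 = i then (pairAt M i).2 else (pairAt M i).1

lemma mate_spec {M : SecStr} (h : M.pairedAt i) :
    ∃ q ∈ M.pairs, (q.1 = i ∧ q.2 = mate M i) ∨ (q.2 = i ∧ q.1 = mate M i) := by
  obtain ⟨hmem, hor⟩ := pairAt_mem h
  rcases hor with h1 | h2
  · exact ⟨pairAt M i, hmem, Or.inl ⟨h1, by rw [mate, if_pos h1]⟩⟩
  · by_cases h1 : (pairAt M i).1 = i
    · exact ⟨pairAt M i, hmem, Or.inl ⟨h1, by rw [mate, if_pos h1]⟩⟩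
    · exact ⟨pairAt M i, hmem, Or.inr ⟨h2, by rw [mate, if_neg h1]⟩⟩

lemma mate_mate {M : SecStr} (h : M.pairedAt i) :
    M.pairedAt (mate M i) ∧ mate M (mate M i) = i := by
  obtain ⟨q, hq, ⟨h1, h2⟩ | ⟨h1, h2⟩⟩ := mate_spec h
  · have hpa : M.pairedAt (mate M i) := ⟨q, hq, Or.inr h2⟩
    refine ⟨hpa, ?_⟩
    have hq2 : pairAt M (mate M i) = q := pairAt_eq hq (Or.inr h2)
    rw [mate, hq2, if_neg (by rw [← h2]; exact Nat.ne_of_lt (M.lt q hq)), h1]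
  · have hpa : M.pairedAt (mate M i) := ⟨q, hq, Or.inl h2⟩
    refine ⟨hpa, ?_⟩
    have hq2 : pairAt M (mate M i) = q := pairAt_eq hq (Or.inl h2)
    rw [mate, hq2, if_pos h2, h1]

lemma mate_interior {M : SecStr} (hm : m ∈ M.pairs) (hz1 : m.1 < i) (hz2 : i < m.2)
    (h : M.pairedAt i) : m.1 < mate M i ∧ mate M i < m.2 := by
  obtain ⟨q, hq, ⟨h1, h2⟩ | ⟨h1, h2⟩⟩ := mate_spec h
  · have hne : q ≠ m := by intro h; rw [h] at h1; omega
    have h4 := M.once q hq m hm hne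
    have hnc : ¬ (m.1 < q.1 ∧ q.1 < m.2 ∧ m.2 < q.2) := M.noncross m hm q hq
    have hlt := M.lt q hq
    have e1 := h4.2.2.1; have e2 := h4.2.2.2
    constructor
    · omega
    · rw [← h2]; omega
  · have hne : q ≠ m := by intro h; rw [h] at h1; omega
    have h4 := M.once q hq m hm hne
    have hnc : ¬ (q.1 < m.1 ∧ m.1 < q.2 ∧ q.2 < m.2) := M.noncross q hq m hm
    have hlt := M.lt q hq
    have e1 := h4.1; have e2 := h4.2.1
    constructor
    · rw [← h2]; omega
    · omega

lemma wc_cases (h : wcPair a b) :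
    (a = Base.G ∧ b = Base.C) ∨ (a = Base.C ∧ b = Base.G) ∨
    (a = Base.A ∧ b = Base.U) ∨ (a = Base.U ∧ b = Base.A) := by
  cases a <;> cases b <;> simp_all [wcPair]

lemma compat_letters {M : SecStr} (hcom : compat wcPair (wseq S col) M) :
    M.len = S.len ∧ ∀ p ∈ M.pairs, wcPair (letter S col p.1) (letter S col p.2) := by
  obtain ⟨h1, h2⟩ := hcom
  rw [wseq_length] at h1
  refine ⟨h1, fun p hp => ?_⟩
  have hub := M.ub p hp
  have hlt := M.lt p hp
  have := h2 p hp
  rwa [default_base, wseq_getD (by omega), wseq_getD (by omega)] at this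

/-- the G-C pairs of M -/
noncomputable def GCM (S : SecStr) (col : ℕ × ℕ → Col) (M : SecStr) : Finset (ℕ × ℕ) :=
  M.pairs.filter (fun p => letter S col p.1 = Base.G ∨ letter S col p.1 = Base.C)
/-- the A-U pairs of M -/
noncomputable def AUM (S : SecStr) (col : ℕ × ℕ → Col) (M : SecStr) : Finset (ℕ × ℕ) :=
  M.pairs.filter (fun p => ¬(letter S col p.1 = Base.G ∨ letter S col p.1 = Base.C))

section Mside
variable {M : SecStr}
variable (hlen : M.len = S.len)
variable (hwc : ∀ p ∈ M.pairs, wcPair (letter S col p.1) (letter S col p.2))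

include hwc in
lemma GCM_letters (hp : p ∈ GCM S col M) :
    p ∈ M.pairs ∧ ((letter S col p.1 = Base.G ∧ letter S col p.2 = Base.C) ∨
      (letter S col p.1 = Base.C ∧ letter S col p.2 = Base.G)) := by
  rw [GCM, Finset.mem_filter] at hp
  obtain ⟨hm, hl⟩ := hp
  rcases wc_cases (hwc p hm) with h | h | h | h
  · exact ⟨hm, Or.inl h⟩
  · exact ⟨hm, Or.inr h⟩
  · rw [h.1] at hl; simp at hl
  · rw [h.1] at hl; simp at hl

include hwc in
lemma AUM_letters (hp : p ∈ AUM S col M) :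
    p ∈ M.pairs ∧ ((letter S col p.1 = Base.A ∧ letter S col p.2 = Base.U) ∨
      (letter S col p.1 = Base.U ∧ letter S col p.2 = Base.A)) := by
  rw [AUM, Finset.mem_filter] at hp
  obtain ⟨hm, hl⟩ := hp
  rcases wc_cases (hwc p hm) with h | h | h | h
  · exact absurd (Or.inl h.1) hl
  · exact absurd (Or.inr h.1) hl
  · exact ⟨hm, Or.inl h⟩
  · exact ⟨hm, Or.inr h⟩

include hlen hwc in
lemma GCM_card_le : (GCM S col M).card ≤ cnt S col Base.C S.len := by
  rw [cnt]
  apply Finset.card_le_card_of_injOn (fun p => if letter S col p.1 = Base.C then p.1 else p.2)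
  · intro p hp
    simp only [Finset.mem_coe] at hp ⊢
    obtain ⟨hm, hl⟩ := GCM_letters hwc hp
    have hub := M.ub p hm
    have hlt := M.lt p hm
    rw [hlen] at hub
    rcases hl with ⟨h1, h2⟩ | ⟨h1, h2⟩
    · rw [if_neg (by rw [h1]; exact Base.noConfusion), Finset.mem_filter, Finset.mem_range]
      exact ⟨by omega, h2⟩
    · rw [if_pos h1, Finset.mem_filter, Finset.mem_range]
      exact ⟨by omega, h1⟩
  · intro p hp q hq heq
    have hpm := (Finset.mem_filter.1 (Finset.mem_coe.1 hp)).1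
    have hqm := (Finset.mem_filter.1 (Finset.mem_coe.1 hq)).1
    have heq2 : (if letter S col p.1 = Base.C then p.1 else p.2)
        = (if letter S col q.1 = Base.C then q.1 else q.2) := heq
    refine pair_unique hpm hqm ((if_endpoint (c := letter S col p.1 = Base.C) p.1 p.2).imp Eq.symm Eq.symm) ?_
    rw [heq2]
    exact (if_endpoint (c := letter S col q.1 = Base.C) q.1 q.2).imp Eq.symm Eq.symm

include hlen hwc in
lemma GCM_card_le_G : (GCM S col M).card ≤ cnt S col Base.G S.len := by
  rw [cnt]
  apply Finset.card_le_card_of_injOn (fun p => if letter S col p.1 = Base.G then p.1 else p.2)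
  · intro p hp
    simp only [Finset.mem_coe] at hp ⊢
    obtain ⟨hm, hl⟩ := GCM_letters hwc hp
    have hub := M.ub p hm
    have hlt := M.lt p hm
    rw [hlen] at hub
    rcases hl with ⟨h1, h2⟩ | ⟨h1, h2⟩
    · rw [if_pos h1, Finset.mem_filter, Finset.mem_range]
      exact ⟨by omega, h1⟩
    · rw [if_neg (by rw [h1]; exact Base.noConfusion), Finset.mem_filter, Finset.mem_range]
      exact ⟨by omega, h2⟩
  · intro p hp q hq heq
    have hpm := (Finset.mem_filter.1 (Finset.mem_coe.1 hp)).1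
    have hqm := (Finset.mem_filter.1 (Finset.mem_coe.1 hq)).1
    have heq2 : (if letter S col p.1 = Base.G then p.1 else p.2)
        = (if letter S col q.1 = Base.G then q.1 else q.2) := heq
    refine pair_unique hpm hqm ((if_endpoint (c := letter S col p.1 = Base.G) p.1 p.2).imp Eq.symm Eq.symm) ?_
    rw [heq2]
    exact (if_endpoint (c := letter S col q.1 = Base.G) q.1 q.2).imp Eq.symm Eq.symm

include hlen hwc in
lemma AUM_card_le : (AUM S col M).card ≤ cnt S col Base.U S.len := by
  rw [cnt]
  apply Finset.card_le_card_of_injOn (fun p => if letter S col p.1 = Base.U then p.1 else p.2)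
  · intro p hp
    simp only [Finset.mem_coe] at hp ⊢
    obtain ⟨hm, hl⟩ := AUM_letters hwc hp
    have hub := M.ub p hm
    have hlt := M.lt p hm
    rw [hlen] at hub
    rcases hl with ⟨h1, h2⟩ | ⟨h1, h2⟩
    · rw [if_neg (by rw [h1]; exact Base.noConfusion), Finset.mem_filter, Finset.mem_range]
      exact ⟨by omega, h2⟩
    · rw [if_pos h1, Finset.mem_filter, Finset.mem_range]
      exact ⟨by omega, h1⟩
  · intro p hp q hq heq
    have hpm := (Finset.mem_filter.1 (Finset.mem_coe.1 hp)).1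
    have hqm := (Finset.mem_filter.1 (Finset.mem_coe.1 hq)).1
    have heq2 : (if letter S col p.1 = Base.U then p.1 else p.2)
        = (if letter S col q.1 = Base.U then q.1 else q.2) := heq
    refine pair_unique hpm hqm ((if_endpoint (c := letter S col p.1 = Base.U) p.1 p.2).imp Eq.symm Eq.symm) ?_
    rw [heq2]
    exact (if_endpoint (c := letter S col q.1 = Base.U) q.1 q.2).imp Eq.symm Eq.symm

lemma M_split : (GCM S col M).card + (AUM S col M).card = M.pairs.card :=
  Finset.card_filter_add_card_filter_not _

lemma cnt_C_len : cnt S col Base.C S.len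
    = (S.pairs.filter (fun q => col q = Col.black)).card
    + (S.pairs.filter (fun q => col q = Col.white)).card := by
  rw [cnt_C]
  congr 1
  · apply congrArg Finset.card; apply Finset.filter_congr
    intro q hq
    have := S.ub q hq
    simp only [and_iff_left_iff_imp]
    omega
  · apply congrArg Finset.card; apply Finset.filter_congr
    intro q hq
    have h1 := S.ub q hq
    have h2 := S.lt q hq
    simp only [and_iff_left_iff_imp]
    omega

lemma cnt_G_len : cnt S col Base.G S.len
    = (S.pairs.filter (fun q => col q = Col.black)).card
    + (S.pairs.filter (fun q => col q = Col.white)).card := by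
  rw [cnt_G]
  congr 1
  · apply congrArg Finset.card; apply Finset.filter_congr
    intro q hq
    have h1 := S.ub q hq
    have h2 := S.lt q hq
    simp only [and_iff_left_iff_imp]
    omega
  · apply congrArg Finset.card; apply Finset.filter_congr
    intro q hq
    have := S.ub q hq
    simp only [and_iff_left_iff_imp]
    omega

lemma S_card_split : S.pairs.card
    = (S.pairs.filter (fun q => col q = Col.black)).card
    + (S.pairs.filter (fun q => col q = Col.white)).card
    + (S.pairs.filter (fun q => col q = Col.gray)).card := by
  classical
  have h1 := Finset.card_filter_add_card_filter_not
    (s := S.pairs) (p := fun q => col q = Col.black)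
  have h2 := Finset.card_filter_add_card_filter_not
    (s := S.pairs.filter (fun q => ¬ col q = Col.black)) (p := fun q => col q = Col.white)
  rw [Finset.filter_filter, Finset.filter_filter] at h2
  have e1 : (S.pairs.filter (fun q => ¬col q = Col.black ∧ col q = Col.white))
      = S.pairs.filter (fun q => col q = Col.white) := by
    apply Finset.filter_congr; intro q hq
    constructor
    · exact fun h => h.2
    · intro h; rw [h]; exact ⟨Col.noConfusion, rfl⟩
  have e2 : (S.pairs.filter (fun q => ¬col q = Col.black ∧ ¬col q = Col.white))
      = S.pairs.filter (fun q => col q = Col.gray) := by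
    apply Finset.filter_congr; intro q hq
    rcases h : col q
    · simp
    · simp
    · simp
  rw [e1, e2] at h2
  omega

include hlen hwc in
/-- Any compatible structure has at most as many pairs as S. -/
lemma M_card_le : M.pairs.card ≤ S.pairs.card := by
  have h1 := GCM_card_le hlen hwc
  have h2 := AUM_card_le hlen hwc
  have h3 := M_split (S := S) (col := col) (M := M)
  rw [cnt_C_len] at h1
  rw [cnt_U] at h2
  have h4 := S_card_split (S := S) (col := col)
  omega

end Mside

section Eq
variable {M : SecStr}
variable (hlen : M.len = S.len)
variable (hwc : ∀ p ∈ M.pairs, wcPair (letter S col p.1) (letter S col p.2))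
variable (hcard : S.pairs.card ≤ M.pairs.card)

include hlen hwc hcard in
lemma cards_eq : (GCM S col M).card = cnt S col Base.C S.len
    ∧ (GCM S col M).card = cnt S col Base.G S.len
    ∧ (AUM S col M).card = cnt S col Base.U S.len := by
  have h1 := GCM_card_le hlen hwc
  have h1' := GCM_card_le_G hlen hwc
  have h2 := AUM_card_le hlen hwc
  have h3 := M_split (S := S) (col := col) (M := M)
  have h4 := S_card_split (S := S) (col := col)
  have h5 := cnt_C_len (S := S) (col := col)
  have h6 := cnt_G_len (S := S) (col := col)
  have h7 := cnt_U (S := S) (col := col)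
  omega

include hlen hwc hcard in
lemma perfG : ∀ i, letter S col i = Base.G → M.pairedAt i := by
  intro i hG
  have hiS : i < S.len := by
    obtain ⟨p, hp, ⟨h1, -⟩ | ⟨h2, -⟩⟩ := letter_G_inv hG
    · have := S.ub p hp; have := S.lt p hp; omega
    · have := S.ub p hp; omega
  have hcards := (cards_eq hlen hwc hcard).2.1
  have hsurj := Finset.surj_on_of_inj_on_of_card_le
    (s := GCM S col M) (t := (Finset.range S.len).filter (fun j => letter S col j = Base.G))
    (fun p _ => if letter S col p.1 = Base.G then p.1 else p.2)
    ?_ ?_ ?_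
  · obtain ⟨p, hp, hfp⟩ := hsurj i (by rw [Finset.mem_filter, Finset.mem_range]; exact ⟨hiS, hG⟩)
    have hpm := (Finset.mem_filter.1 hp).1
    have hfp2 : i = (if letter S col p.1 = Base.G then p.1 else p.2) := hfp
    rcases if_endpoint (c := letter S col p.1 = Base.G) p.1 p.2 with h | h
    · exact ⟨p, hpm, Or.inl (hfp2.trans h).symm⟩
    · exact ⟨p, hpm, Or.inr (hfp2.trans h).symm⟩
  · intro p hp
    show (if letter S col p.1 = Base.G then p.1 else p.2) ∈ _
    obtain ⟨hm, hl⟩ := GCM_letters hwc hp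
    have hub := M.ub p hm
    have hlt := M.lt p hm
    rw [hlen] at hub
    rcases hl with ⟨h1, h2⟩ | ⟨h1, h2⟩
    · rw [if_pos h1, Finset.mem_filter, Finset.mem_range]; exact ⟨by omega, h1⟩
    · rw [if_neg (by rw [h1]; exact Base.noConfusion), Finset.mem_filter, Finset.mem_range]
      exact ⟨by omega, h2⟩
  · intro p q hp hq heq
    have hpm := (Finset.mem_filter.1 hp).1
    have hqm := (Finset.mem_filter.1 hq).1
    have heq2 : (if letter S col p.1 = Base.G then p.1 else p.2)
        = (if letter S col q.1 = Base.G then q.1 else q.2) := heq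
    refine pair_unique hpm hqm
      ((if_endpoint (c := letter S col p.1 = Base.G) p.1 p.2).imp Eq.symm Eq.symm) ?_
    rw [heq2]
    exact (if_endpoint (c := letter S col q.1 = Base.G) q.1 q.2).imp Eq.symm Eq.symm
  · rw [cnt] at hcards; omega

include hlen hwc hcard in
lemma perfC : ∀ i, letter S col i = Base.C → M.pairedAt i := by
  intro i hG
  have hiS : i < S.len := by
    obtain ⟨p, hp, ⟨h1, -⟩ | ⟨h2, -⟩⟩ := letter_C_inv hG
    · have := S.ub p hp; omega
    · have := S.ub p hp; have := S.lt p hp; omega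
  have hcards := (cards_eq hlen hwc hcard).1
  have hsurj := Finset.surj_on_of_inj_on_of_card_le
    (s := GCM S col M) (t := (Finset.range S.len).filter (fun j => letter S col j = Base.C))
    (fun p _ => if letter S col p.1 = Base.C then p.1 else p.2)
    ?_ ?_ ?_
  · obtain ⟨p, hp, hfp⟩ := hsurj i (by rw [Finset.mem_filter, Finset.mem_range]; exact ⟨hiS, hG⟩)
    have hpm := (Finset.mem_filter.1 hp).1
    have hfp2 : i = (if letter S col p.1 = Base.C then p.1 else p.2) := hfp
    rcases if_endpoint (c := letter S col p.1 = Base.C) p.1 p.2 with h | h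
    · exact ⟨p, hpm, Or.inl (hfp2.trans h).symm⟩
    · exact ⟨p, hpm, Or.inr (hfp2.trans h).symm⟩
  · intro p hp
    show (if letter S col p.1 = Base.C then p.1 else p.2) ∈ _
    obtain ⟨hm, hl⟩ := GCM_letters hwc hp
    have hub := M.ub p hm
    have hlt := M.lt p hm
    rw [hlen] at hub
    rcases hl with ⟨h1, h2⟩ | ⟨h1, h2⟩
    · rw [if_neg (by rw [h1]; exact Base.noConfusion), Finset.mem_filter, Finset.mem_range]
      exact ⟨by omega, h2⟩
    · rw [if_pos h1, Finset.mem_filter, Finset.mem_range]; exact ⟨by omega, h1⟩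
  · intro p q hp hq heq
    have hpm := (Finset.mem_filter.1 hp).1
    have hqm := (Finset.mem_filter.1 hq).1
    have heq2 : (if letter S col p.1 = Base.C then p.1 else p.2)
        = (if letter S col q.1 = Base.C then q.1 else q.2) := heq
    refine pair_unique hpm hqm
      ((if_endpoint (c := letter S col p.1 = Base.C) p.1 p.2).imp Eq.symm Eq.symm) ?_
    rw [heq2]
    exact (if_endpoint (c := letter S col q.1 = Base.C) q.1 q.2).imp Eq.symm Eq.symm
  · rw [cnt] at hcards; omega

include hlen hwc hcard in
lemma perfU : ∀ i, letter S col i = Base.U → M.pairedAt i := by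
  intro i hG
  have hiS : i < S.len := by
    obtain ⟨p, hp, -, ⟨h1, -⟩ | ⟨h2, -⟩⟩ := letter_U_inv hG
    · have := S.ub p hp; have := S.lt p hp; omega
    · have := S.ub p hp; omega
  have hcards := (cards_eq hlen hwc hcard).2.2
  have hsurj := Finset.surj_on_of_inj_on_of_card_le
    (s := AUM S col M) (t := (Finset.range S.len).filter (fun j => letter S col j = Base.U))
    (fun p _ => if letter S col p.1 = Base.U then p.1 else p.2)
    ?_ ?_ ?_
  · obtain ⟨p, hp, hfp⟩ := hsurj i (by rw [Finset.mem_filter, Finset.mem_range]; exact ⟨hiS, hG⟩)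
    have hpm := (Finset.mem_filter.1 hp).1
    have hfp2 : i = (if letter S col p.1 = Base.U then p.1 else p.2) := hfp
    rcases if_endpoint (c := letter S col p.1 = Base.U) p.1 p.2 with h | h
    · exact ⟨p, hpm, Or.inl (hfp2.trans h).symm⟩
    · exact ⟨p, hpm, Or.inr (hfp2.trans h).symm⟩
  · intro p hp
    show (if letter S col p.1 = Base.U then p.1 else p.2) ∈ _
    obtain ⟨hm, hl⟩ := AUM_letters hwc hp
    have hub := M.ub p hm
    have hlt := M.lt p hm
    rw [hlen] at hub
    rcases hl with ⟨h1, h2⟩ | ⟨h1, h2⟩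
    · rw [if_neg (by rw [h1]; exact Base.noConfusion), Finset.mem_filter, Finset.mem_range]
      exact ⟨by omega, h2⟩
    · rw [if_pos h1, Finset.mem_filter, Finset.mem_range]; exact ⟨by omega, h1⟩
  · intro p q hp hq heq
    have hpm := (Finset.mem_filter.1 hp).1
    have hqm := (Finset.mem_filter.1 hq).1
    have heq2 : (if letter S col p.1 = Base.U then p.1 else p.2)
        = (if letter S col q.1 = Base.U then q.1 else q.2) := heq
    refine pair_unique hpm hqm
      ((if_endpoint (c := letter S col p.1 = Base.U) p.1 p.2).imp Eq.symm Eq.symm) ?_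
    rw [heq2]
    exact (if_endpoint (c := letter S col q.1 = Base.U) q.1 q.2).imp Eq.symm Eq.symm
  · rw [cnt] at hcards; omega

include hwc in
lemma mate_wc (h : M.pairedAt i) :
    wcPair (letter S col i) (letter S col (mate M i)) ∨
    wcPair (letter S col (mate M i)) (letter S col i) := by
  obtain ⟨q, hq, ⟨h1, h2⟩ | ⟨h1, h2⟩⟩ := mate_spec h
  · left; have := hwc q hq; rwa [h1, h2] at this
  · right; have := hwc q hq; rwa [h1, h2] at this

include hwc in
lemma mate_G (h : M.pairedAt i) (hG : letter S col i = Base.G) :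
    letter S col (mate M i) = Base.C := by
  rcases mate_wc hwc h with hw | hw <;> rw [hG] at hw <;>
    rcases wc_cases hw with h' | h' | h' | h' <;> simp_all

include hwc in
lemma mate_C (h : M.pairedAt i) (hG : letter S col i = Base.C) :
    letter S col (mate M i) = Base.G := by
  rcases mate_wc hwc h with hw | hw <;> rw [hG] at hw <;>
    rcases wc_cases hw with h' | h' | h' | h' <;> simp_all

include hlen hwc hcard in
lemma balance (hm : m ∈ M.pairs) :
    ((Finset.Ico (m.1 + 1) m.2).filter (fun i => letter S col i = Base.G)).card
    = ((Finset.Ico (m.1 + 1) m.2).filter (fun i => letter S col i = Base.C)).card := by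
  apply Finset.card_nbij' (mate M) (mate M)
  · intro i hi
    simp only [Finset.mem_coe] at hi ⊢
    rw [Finset.mem_filter, Finset.mem_Ico] at hi
    obtain ⟨⟨hi1, hi2⟩, hG⟩ := hi
    have hpa := perfG hlen hwc hcard i hG
    have hint := mate_interior hm (by omega) hi2 hpa
    rw [Finset.mem_filter, Finset.mem_Ico]
    exact ⟨⟨by omega, hint.2⟩, mate_G hwc hpa hG⟩
  · intro i hi
    simp only [Finset.mem_coe] at hi ⊢
    rw [Finset.mem_filter, Finset.mem_Ico] at hi
    obtain ⟨⟨hi1, hi2⟩, hG⟩ := hi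
    have hpa := perfC hlen hwc hcard i hG
    have hint := mate_interior hm (by omega) hi2 hpa
    rw [Finset.mem_filter, Finset.mem_Ico]
    exact ⟨⟨by omega, hint.2⟩, mate_C hwc hpa hG⟩
  · intro i hi
    simp only [Finset.mem_coe] at hi ⊢
    rw [Finset.mem_filter] at hi
    exact (mate_mate (perfG hlen hwc hcard i hi.2)).2
  · intro i hi
    simp only [Finset.mem_coe] at hi ⊢
    rw [Finset.mem_filter] at hi
    exact (mate_mate (perfC hlen hwc hcard i hi.2)).2

lemma cnt_split (b : Base) (hxy : x + 1 ≤ y) : cnt S col b y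
    = cnt S col b (x + 1) + ((Finset.Ico (x + 1) y).filter (fun i => letter S col i = b)).card := by
  classical
  have hdisj : Disjoint ((Finset.range (x+1)).filter (fun i => letter S col i = b))
      ((Finset.Ico (x+1) y).filter (fun i => letter S col i = b)) := by
    rw [Finset.disjoint_left]
    intro a ha hb
    rw [Finset.mem_filter, Finset.mem_range] at ha
    rw [Finset.mem_filter, Finset.mem_Ico] at hb
    omega
  have hsplit : Finset.range y = Finset.range (x+1) ∪ Finset.Ico (x+1) y := by
    ext j
    simp only [Finset.mem_range, Finset.mem_union, Finset.mem_Ico]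
    omega
  rw [cnt, cnt, hsplit, Finset.filter_union, Finset.card_union_of_disjoint hdisj]

include hlen hwc hcard in
lemma lam_balance (hm : m ∈ M.pairs) : lam S col m.2 = lam S col (m.1 + 1) := by
  have hlt := M.lt m hm
  have hG := cnt_split (S := S) (col := col) (x := m.1) (y := m.2) Base.G hlt
  have hC := cnt_split (S := S) (col := col) (x := m.1) (y := m.2) Base.C hlt
  have hb := balance hlen hwc hcard hm
  rw [lam, lam, hG, hC, hb]
  push_cast
  ring

variable (hsep : separatedCol S col)

include hlen hwc hcard hsep in
lemma AU_left_gray (hm : m ∈ M.pairs) (hA : letter S col m.1 = Base.A)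
    (hU : letter S col m.2 = Base.U) : S.pairedAt m.1 := by
  by_contra hun
  obtain ⟨g, hg, hcg, ⟨h1, -⟩ | ⟨h2, -⟩⟩ := letter_U_inv hU
  · have e1 : lam S col m.2 = pairLvl S col g := lam_gray hg hcg m.2 (Or.inl h1.symm)
    have e2 : lam S col (m.1 + 1) = unpLvl S col m.1 :=
      lam_unp hun (m.1 + 1) (Or.inr rfl)
    have e3 := lam_balance hlen hwc hcard hm
    have hm1 : m.1 < S.len := by
      have := M.ub m hm; have := M.lt m hm; omega
    exact hsep g hg hcg m.1 ⟨hm1, hun⟩ (by omega)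
  · have e1 : lam S col m.2 = pairLvl S col g :=
      lam_gray hg hcg m.2 (Or.inr (Or.inr (Or.inl h2.symm)))
    have e2 : lam S col (m.1 + 1) = unpLvl S col m.1 :=
      lam_unp hun (m.1 + 1) (Or.inr rfl)
    have e3 := lam_balance hlen hwc hcard hm
    have hm1 : m.1 < S.len := by
      have := M.ub m hm; have := M.lt m hm; omega
    exact hsep g hg hcg m.1 ⟨hm1, hun⟩ (by omega)

include hlen hwc hcard hsep in
lemma AU_right_gray (hm : m ∈ M.pairs) (hU : letter S col m.1 = Base.U)
    (hA : letter S col m.2 = Base.A) : S.pairedAt m.2 := by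
  by_contra hun
  obtain ⟨g, hg, hcg, ⟨h1, -⟩ | ⟨h2, -⟩⟩ := letter_U_inv hU
  · have e1 : lam S col (m.1 + 1) = pairLvl S col g :=
      lam_gray hg hcg (m.1 + 1) (Or.inr (Or.inl (by rw [h1])))
    have e2 : lam S col m.2 = unpLvl S col m.2 := lam_unp hun m.2 (Or.inl rfl)
    have e3 := lam_balance hlen hwc hcard hm
    have hm2 : m.2 < S.len := by have := M.ub m hm; omega
    exact hsep g hg hcg m.2 ⟨hm2, hun⟩ (by omega)
  · have e1 : lam S col (m.1 + 1) = pairLvl S col g :=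
      lam_gray hg hcg (m.1 + 1) (Or.inr (Or.inr (Or.inr (by rw [h2]))))
    have e2 : lam S col m.2 = unpLvl S col m.2 := lam_unp hun m.2 (Or.inl rfl)
    have e3 := lam_balance hlen hwc hcard hm
    have hm2 : m.2 < S.len := by have := M.ub m hm; omega
    exact hsep g hg hcg m.2 ⟨hm2, hun⟩ (by omega)

include hlen hwc hcard hsep in
lemma perfAgray : ∀ i, letter S col i = Base.A → S.pairedAt i → M.pairedAt i := by
  intro i hA hSp
  have hiS : i < S.len := by
    obtain ⟨p, hp, h⟩ := hSp
    have := S.ub p hp; have := S.lt p hp; omega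
  have hAU := (cards_eq hlen hwc hcard).2.2
  have hAgray := cnt_Agray (S := S) (col := col)
  have hU := cnt_U (S := S) (col := col)
  have hsurj := Finset.surj_on_of_inj_on_of_card_le
    (s := AUM S col M)
    (t := (Finset.range S.len).filter (fun j => letter S col j = Base.A ∧ S.pairedAt j))
    (fun p _ => if letter S col p.1 = Base.A then p.1 else p.2)
    ?_ ?_ ?_
  · obtain ⟨p, hp, hfp⟩ := hsurj i
      (by rw [Finset.mem_filter, Finset.mem_range]; exact ⟨hiS, hA, hSp⟩)
    have hpm := (Finset.mem_filter.1 hp).1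
    have hfp2 : i = (if letter S col p.1 = Base.A then p.1 else p.2) := hfp
    rcases if_endpoint (c := letter S col p.1 = Base.A) p.1 p.2 with h | h
    · exact ⟨p, hpm, Or.inl (hfp2.trans h).symm⟩
    · exact ⟨p, hpm, Or.inr (hfp2.trans h).symm⟩
  · intro p hp
    show (if letter S col p.1 = Base.A then p.1 else p.2) ∈ _
    obtain ⟨hm, hl⟩ := AUM_letters hwc hp
    have hub := M.ub p hm
    have hlt := M.lt p hm
    rw [hlen] at hub
    rcases hl with ⟨h1, h2⟩ | ⟨h1, h2⟩
    · rw [if_pos h1, Finset.mem_filter, Finset.mem_range]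
      exact ⟨by omega, h1, AU_left_gray hlen hwc hcard hsep hm h1 h2⟩
    · rw [if_neg (by rw [h1]; exact Base.noConfusion), Finset.mem_filter, Finset.mem_range]
      exact ⟨by omega, h2, AU_right_gray hlen hwc hcard hsep hm h1 h2⟩
  · intro p q hp hq heq
    have hpm := (Finset.mem_filter.1 hp).1
    have hqm := (Finset.mem_filter.1 hq).1
    have heq2 : (if letter S col p.1 = Base.A then p.1 else p.2)
        = (if letter S col q.1 = Base.A then q.1 else q.2) := heq
    refine pair_unique hpm hqm
      ((if_endpoint (c := letter S col p.1 = Base.A) p.1 p.2).imp Eq.symm Eq.symm) ?_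
    rw [heq2]
    exact (if_endpoint (c := letter S col q.1 = Base.A) q.1 q.2).imp Eq.symm Eq.symm
  · omega

end Eq

section Cases
variable {m : ℕ × ℕ}

lemma caseOC (hm12 : m.1 < m.2)
    (hIntC : ∀ r ∈ S.pairs, ∀ z, m.1 < z → z < m.2 → (r.1 = z ∨ r.2 = z) → m.1 < r.1 ∧ r.2 < m.2)
    (hpS : p ∈ S.pairs) (hqS : q ∈ S.pairs) (hp1 : p.1 = m.1) (hq2 : q.2 = m.2) : p = q := by
  by_cases hne : p = q
  · exact hne
  exfalso
  have hplt := S.lt p hpS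
  have hqlt := S.lt q hqS
  have hp2 : ¬ (p.2 < m.2) := by
    intro h
    have := hIntC p hpS p.2 (by omega) h (Or.inr rfl)
    omega
  have hp2' : p.2 ≠ m.2 := by
    intro h
    exact hne (pair_eq_of_snd hpS hqS (h.trans hq2.symm))
  have hq1 : ¬ (m.1 < q.1) := by
    intro h
    have := hIntC q hqS q.1 h (by omega) (Or.inl rfl)
    omega
  have hq1' : q.1 ≠ m.1 := by
    intro h
    exact hne (pair_eq_of_fst hpS hqS (hp1.trans h.symm))
  exact S.noncross q hqS p hpS ⟨by omega, by omega, by omega⟩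

lemma caseOO (hm12 : m.1 < m.2)
    (hIntC : ∀ r ∈ S.pairs, ∀ z, m.1 < z → z < m.2 → (r.1 = z ∨ r.2 = z) → m.1 < r.1 ∧ r.2 < m.2)
    (hpS : p ∈ S.pairs) (hqS : q ∈ S.pairs) (hp1 : p.1 = m.1) (hq1 : q.1 = m.2) :
    S.isParentOf p q := by
  have hplt := S.lt p hpS
  have hqlt := S.lt q hqS
  have hne : p ≠ q := fun h => by rw [h] at hp1; omega
  have h4 := S.once p hpS q hqS hne
  have hp2ne : p.2 ≠ m.2 := by rw [← hq1]; exact (fst_ne_snd hqS hpS).symm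
  have hp2 : ¬ (p.2 < m.2) := fun h => by
    have := hIntC p hpS p.2 (by omega) h (Or.inr rfl); omega
  have hnc : ¬ (p.1 < q.1 ∧ q.1 < p.2 ∧ p.2 < q.2) := S.noncross p hpS q hqS
  have henc : encloses p q := by
    refine ⟨by omega, ?_⟩
    have h1 : ¬ (p.2 < q.2) := fun h => hnc ⟨by omega, by omega, h⟩
    have h2 := h4.2.2.2
    omega
  refine ⟨hpS, hqS, henc, ?_⟩
  rintro ⟨r, hr, ⟨hr1, hr2⟩, ⟨hr3, hr4⟩⟩
  have hrlt := S.lt r hr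
  have := hIntC r hr r.1 (by omega) (by omega) (Or.inl rfl)
  omega

lemma caseCC (hm12 : m.1 < m.2)
    (hIntC : ∀ r ∈ S.pairs, ∀ z, m.1 < z → z < m.2 → (r.1 = z ∨ r.2 = z) → m.1 < r.1 ∧ r.2 < m.2)
    (hpS : p ∈ S.pairs) (hqS : q ∈ S.pairs) (hp2 : p.2 = m.1) (hq2 : q.2 = m.2) :
    S.isParentOf q p := by
  have hplt := S.lt p hpS
  have hqlt := S.lt q hqS
  have hne : p ≠ q := fun h => by rw [h] at hp2; omega
  have h4 := S.once p hpS q hqS hne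
  have hq1ne : q.1 ≠ m.1 := by rw [← hp2]; exact fst_ne_snd hqS hpS
  have hq1 : ¬ (m.1 < q.1) := fun h => by
    have := hIntC q hqS q.1 h (by omega) (Or.inl rfl); omega
  have hnc : ¬ (p.1 < q.1 ∧ q.1 < p.2 ∧ p.2 < q.2) := S.noncross p hpS q hqS
  have henc : encloses q p := by
    constructor
    · have e1 : ¬ (p.1 < q.1) := fun h => hnc ⟨h, by omega, by omega⟩
      have e2 := h4.1
      omega
    · omega
  refine ⟨hqS, hpS, henc, ?_⟩
  rintro ⟨r, hr, ⟨hr1, hr2⟩, ⟨hr3, hr4⟩⟩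
  have hrlt := S.lt r hr
  have := hIntC r hr r.2 (by omega) (by omega) (Or.inr rfl)
  omega

lemma caseCO (hm12 : m.1 < m.2)
    (hIntC : ∀ r ∈ S.pairs, ∀ z, m.1 < z → z < m.2 → (r.1 = z ∨ r.2 = z) → m.1 < r.1 ∧ r.2 < m.2)
    (hpS : p ∈ S.pairs) (hqS : q ∈ S.pairs) (hp2 : p.2 = m.1) (hq1 : q.1 = m.2) :
    (¬ S.hasParent p ∧ ¬ S.hasParent q) ∨ ∃ P, S.isParentOf P p ∧ S.isParentOf P q := by
  have hplt := S.lt p hpS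
  have hqlt := S.lt q hqS
  have hEq : ∀ r ∈ S.pairs, (encloses r p ↔ encloses r q) := by
    intro r hr
    constructor
    · rintro ⟨h1, h2⟩
      have hrq : r ≠ q := by intro h; rw [h] at h1; omega
      have h4 := S.once r hr q hqS hrq
      have hr2ne : r.2 ≠ m.2 := by rw [← hq1]; exact (fst_ne_snd hqS hr).symm
      have hr2 : ¬ (r.2 < m.2) := fun h => by
        have := hIntC r hr r.2 (by omega) h (Or.inr rfl); omega
      have hnc : ¬ (r.1 < q.1 ∧ q.1 < r.2 ∧ r.2 < q.2) := S.noncross r hr q hqS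
      refine ⟨by omega, ?_⟩
      have e1 : ¬ (r.2 < q.2) := fun h => hnc ⟨by omega, by omega, h⟩
      have e2 := h4.2.2.2
      omega
    · rintro ⟨h1, h2⟩
      have hrp : r ≠ p := by intro h; rw [h] at h2; omega
      have h4 := S.once p hpS r hr (Ne.symm hrp)
      have hr1ne : r.1 ≠ m.1 := by rw [← hp2]; exact fst_ne_snd hr hpS
      have hr1 : ¬ (m.1 < r.1) := fun h => by
        have := hIntC r hr r.1 h (by omega) (Or.inl rfl); omega
      have hnc : ¬ (p.1 < r.1 ∧ r.1 < p.2 ∧ p.2 < r.2) := S.noncross p hpS r hr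
      constructor
      · have e1 : ¬ (p.1 < r.1) := fun h => hnc ⟨h, by omega, by omega⟩
        have e2 := h4.1
        omega
      · omega
  by_cases hP : S.hasParent p
  · obtain ⟨P, hPp⟩ := parent_exists hpS hP
    right
    refine ⟨P, hPp, hPp.1, hqS, (hEq P hPp.1).1 hPp.2.2.1, ?_⟩
    rintro ⟨r, hr, hr1, hr2⟩
    exact hPp.2.2.2 ⟨r, hr, hr1, (hEq r hr).2 hr2⟩
  · left
    refine ⟨hP, ?_⟩
    rintro ⟨r, hr, hre⟩
    exact hP ⟨r, hr, (hEq r hr).2 hre⟩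

end Cases

lemma sib_false (hpS : p ∈ S.pairs) (hqS : q ∈ S.pairs) (hne : p ≠ q)
    (hcp : col p = c) (hcq : col q = c)
    (hsib : (¬ S.hasParent p ∧ ¬ S.hasParent q) ∨ ∃ P, S.isParentOf P p ∧ S.isParentOf P q)
    (hroot : rootChildCount S col c ≤ 1)
    (hchild : ∀ P ∈ S.pairs, childCount S col P c ≤ 1) : False := by
  rcases hsib with ⟨h1, h2⟩ | ⟨P, hPp, hPq⟩
  · have : 1 < rootChildCount S col c := by
      rw [rootChildCount, Finset.one_lt_card]
      exact ⟨p, Finset.mem_filter.2 ⟨hpS, h1, hcp⟩, q, Finset.mem_filter.2 ⟨hqS, h2, hcq⟩, hne⟩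
    omega
  · have : 1 < childCount S col P c := by
      rw [childCount, Finset.one_lt_card]
      exact ⟨p, Finset.mem_filter.2 ⟨hpS, hPp, hcp⟩, q, Finset.mem_filter.2 ⟨hqS, hPq, hcq⟩, hne⟩
    have := hchild P hPp.1
    omega

section Main
variable {M : SecStr}
variable (hpc : properCol S col) (hsep : separatedCol S col)
variable (hlen : M.len = S.len)
variable (hwc : ∀ p ∈ M.pairs, wcPair (letter S col p.1) (letter S col p.2))
variable (hcard : S.pairs.card ≤ M.pairs.card)

include hpc hsep hlen hwc hcard in
lemma M_sub_S : ∀ m ∈ M.pairs, m ∈ S.pairs := by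
  suffices H : ∀ y, ∀ m ∈ M.pairs, m.2 = y → m ∈ S.pairs by
    exact fun m hm => H m.2 m hm rfl
  intro y
  induction y using Nat.strong_induction_on with
  | _ y IH =>
  intro m hm hy
  subst hy
  have hxy : m.1 < m.2 := M.lt m hm
  -- interior M-paired positions lie on common M-S pairs strictly inside m
  have hMint : ∀ z, m.1 < z → z < m.2 → M.pairedAt z →
      ∃ r ∈ M.pairs, r ∈ S.pairs ∧ m.1 < r.1 ∧ r.2 < m.2 ∧ (r.1 = z ∨ r.2 = z) := by
    rintro z hz1 hz2 ⟨q, hq, hqz | hqz⟩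
    · have hne : q ≠ m := fun h => by rw [h] at hqz; omega
      have h4 := M.once q hq m hm hne
      have hnc : ¬ (m.1 < q.1 ∧ q.1 < m.2 ∧ m.2 < q.2) := M.noncross m hm q hq
      have hqlt := M.lt q hq
      have hq2 : q.2 < m.2 := by
        have e1 := h4.2.2.2
        by_contra hc; push_neg at hc
        exact hnc ⟨by omega, by omega, by omega⟩
      have hqS : q ∈ S.pairs := IH q.2 (by omega) q hq rfl
      exact ⟨q, hq, hqS, by omega, hq2, Or.inl hqz⟩
    · have hne : q ≠ m := fun h => by rw [h] at hqz; omega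
      have h4 := M.once q hq m hm hne
      have hnc : ¬ (q.1 < m.1 ∧ m.1 < q.2 ∧ q.2 < m.2) := M.noncross q hq m hm
      have hqlt := M.lt q hq
      have hq1 : m.1 < q.1 := by
        have e1 := h4.1
        by_contra hc; push_neg at hc
        exact hnc ⟨by omega, by omega, by omega⟩
      have hqS : q ∈ S.pairs := IH q.2 (by omega) q hq rfl
      exact ⟨q, hq, hqS, hq1, by omega, Or.inr hqz⟩
  have hIntC : ∀ r ∈ S.pairs, ∀ z, m.1 < z → z < m.2 → (r.1 = z ∨ r.2 = z) →
      m.1 < r.1 ∧ r.2 < m.2 := by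
    intro r hr z hz1 hz2 hrz
    have hzS : S.pairedAt z := ⟨r, hr, hrz⟩
    have hzM : M.pairedAt z := by
      cases hl : letter S col z with
      | A => exact perfAgray hlen hwc hcard hsep z hl hzS
      | U => exact perfU hlen hwc hcard z hl
      | C => exact perfC hlen hwc hcard z hl
      | G => exact perfG hlen hwc hcard z hl
    obtain ⟨r', hr'M, hr'S, h1, h2, hz⟩ := hMint z hz1 hz2 hzM
    have heq : r' = r := pair_unique hr'S hr hz hrz
    rw [← heq]; exact ⟨h1, h2⟩
  have hwcm := hwc m hm
  rcases wc_cases hwcm with ⟨hl1, hl2⟩ | ⟨hl1, hl2⟩ | ⟨hl1, hl2⟩ | ⟨hl1, hl2⟩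
  · -- (G, C)
    obtain ⟨p, hpS, hp⟩ := letter_G_inv hl1
    obtain ⟨q, hqS, hq⟩ := letter_C_inv hl2
    rcases hp with ⟨hp1, hcp⟩ | ⟨hp2, hcp⟩ <;> rcases hq with ⟨hq2, hcq⟩ | ⟨hq1, hcq⟩
    · have hpq := caseOC hxy hIntC hpS hqS hp1 hq2
      have hpm : p = m := by
        rw [Prod.ext_iff]; exact ⟨hp1, by rw [hpq]; exact hq2⟩
      rwa [← hpm]
    · have hpar := caseOO hxy hIntC hpS hqS hp1 hq1
      exact absurd hcq ((hpc.2.2.2 p hpS).2.2.2.2.1 hcp q hqS hpar)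
    · have hpar := caseCC hxy hIntC hpS hqS hp2 hq2
      exact absurd hcp ((hpc.2.2.2 q hqS).2.2.2.2.1 hcq p hpS hpar)
    · have hsib := caseCO hxy hIntC hpS hqS hp2 hq1
      have hne : p ≠ q := fun h => by
        rw [h] at hp2; have := S.lt q hqS; omega
      exact (sib_false hpS hqS hne hcp hcq hsib hpc.2.1
        (fun P hP => (hpc.2.2.2 P hP).2.1)).elim
  · -- (C, G)
    obtain ⟨p, hpS, hp⟩ := letter_C_inv hl1
    obtain ⟨q, hqS, hq⟩ := letter_G_inv hl2
    rcases hp with ⟨hp2, hcp⟩ | ⟨hp1, hcp⟩ <;> rcases hq with ⟨hq1, hcq⟩ | ⟨hq2, hcq⟩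
    · have hsib := caseCO hxy hIntC hpS hqS hp2 hq1
      have hne : p ≠ q := fun h => by
        rw [h] at hp2; have := S.lt q hqS; omega
      exact (sib_false hpS hqS hne hcp hcq hsib hpc.1
        (fun P hP => (hpc.2.2.2 P hP).1)).elim
    · have hpar := caseCC hxy hIntC hpS hqS hp2 hq2
      exact absurd hcp ((hpc.2.2.2 q hqS).2.2.2.2.2 hcq p hpS hpar)
    · have hpar := caseOO hxy hIntC hpS hqS hp1 hq1
      exact absurd hcq ((hpc.2.2.2 p hpS).2.2.2.2.2 hcp q hqS hpar)
    · have hpq := caseOC hxy hIntC hpS hqS hp1 hq2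
      have hpm : p = m := by
        rw [Prod.ext_iff]; exact ⟨hp1, by rw [hpq]; exact hq2⟩
      rwa [← hpm]
  · -- (A, U)
    rcases letter_A_inv hl1 with hup | ⟨p, hpS, hcp, hp⟩
    · exact absurd (AU_left_gray hlen hwc hcard hsep hm hl1 hl2) hup
    obtain ⟨q, hqS, hcq, hq⟩ := letter_U_inv hl2
    rcases hp with ⟨hp1, hop⟩ | ⟨hp2, hop⟩ <;> rcases hq with ⟨hq1, hoq⟩ | ⟨hq2, hoq⟩
    · have hpar := caseOO hxy hIntC hpS hqS hp1 hq1
      exact absurd ((ori_inherit hpar hcp hcq).1 hoq) hop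
    · have hpq := caseOC hxy hIntC hpS hqS hp1 hq2
      have hpm : p = m := by
        rw [Prod.ext_iff]; exact ⟨hp1, by rw [hpq]; exact hq2⟩
      rwa [← hpm]
    · have hsib := caseCO hxy hIntC hpS hqS hp2 hq1
      have := ori_sib hpc hpS hqS hcp hcq (by omega) hsib
      exact absurd hoq this.2
    · have hpar := caseCC hxy hIntC hpS hqS hp2 hq2
      exact absurd ((ori_inherit hpar hcq hcp).1 hop) hoq
  · -- (U, A)
    rcases letter_A_inv hl2 with hup | ⟨q, hqS, hcq, hq⟩
    · exact absurd (AU_right_gray hlen hwc hcard hsep hm hl1 hl2) hup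
    obtain ⟨p, hpS, hcp, hp⟩ := letter_U_inv hl1
    rcases hp with ⟨hp1, hop⟩ | ⟨hp2, hop⟩ <;> rcases hq with ⟨hq1, hoq⟩ | ⟨hq2, hoq⟩
    · have hpar := caseOO hxy hIntC hpS hqS hp1 hq1
      exact absurd ((ori_inherit hpar hcp hcq).2 hop) hoq
    · have hpq := caseOC hxy hIntC hpS hqS hp1 hq2
      have hpm : p = m := by
        rw [Prod.ext_iff]; exact ⟨hp1, by rw [hpq]; exact hq2⟩
      rwa [← hpm]
    · have hsib := caseCO hxy hIntC hpS hqS hp2 hq1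
      have := ori_sib hpc hpS hqS hcp hcq (by omega) hsib
      exact absurd this.1 hop
    · have hpar := caseCC hxy hIntC hpS hqS hp2 hq2
      exact absurd ((ori_inherit hpar hcq hcp).2 hoq) hop

include hpc hsep hlen hwc hcard in
lemma M_eq_S : M.pairs = S.pairs := by
  apply Finset.eq_of_subset_of_card_le
  · intro r hr
    exact M_sub_S hpc hsep hlen hwc hcard r hr
  · exact hcard

end Main

lemma SecStr_ext {M N : SecStr} (h1 : M.len = N.len) (h2 : M.pairs = N.pairs) : M = N := by
  obtain ⟨l1, p1, a1, b1, c1, d1⟩ := M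
  obtain ⟨l2, p2, a2, b2, c2, d2⟩ := N
  dsimp at h1 h2
  subst h1; subst h2
  rfl

lemma energy_const (N : SecStr) (w : List Base) :
    energy (fun _ _ => (-1 : ℝ)) w N = -(N.pairs.card : ℝ) := by
  rw [energy, Finset.sum_const]
  simp

end Dev

/-- if the tree representation of S admits a separated proper
coloring, then S is designable over {A,U,C,G} in the Watson-Crick model. -/
theorem stmt14 (S : SecStr)
    (h : ∃ col : ℕ × ℕ → Col, properCol S col ∧ separatedCol S col) :
    ∃ w : List Base, isDesign wcPair (fun _ _ => (-1 : ℝ)) 1 w S := by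
  obtain ⟨col, hpc, hsep⟩ := h
  refine ⟨wseq S col, ⟨⟨wseq_length.symm, fun p hp => ?_⟩, ?_⟩⟩
  · have hub := S.ub p hp
    have hlt := S.lt p hp
    rw [default_base, wseq_getD (by omega), wseq_getD hub]
    exact wc_open_close hp
  · intro M hcom hne
    obtain ⟨hlenM, hwcM⟩ := compat_letters hcom
    rw [energy_const, energy_const]
    have hle := M_card_le hlenM hwcM
    have hlt : M.pairs.card < S.pairs.card := by
      rcases lt_or_eq_of_le hle with h | h
      · exact h
      · exact absurd (SecStr_ext hlenM (M_eq_S hpc hsep hlenM hwcM (le_of_eq h.symm))) hne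
    have hcast : (M.pairs.card : ℝ) + 1 ≤ (S.pairs.card : ℝ) := by exact_mod_cast hlt
    linarith
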